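/- arXiv:0904.0047 — 6 statements merged into one kernel-verified Lean document; each statement's English description precedes it below -/
import Mathlib

section
/- Let G be a group with a finite symmetric generating set K and balls B_n, and suppose G has subexponential growth, i.e. lim_{n→∞} (log |B_n|)/n = 0. Then there exists a strictly increasing sequence of indices (n_k) such that for every g ∈ G, |g·B_{n_k} △ B_{n_k}| / |B_{n_k}| → 0 as k → ∞; in particular the balls contain a Følner subsequence and G admits a Følner sequence. -/
open Filter Topology Pointwise

/-- The ball of radius `n` in a group `G` with respect to a generating set `K`:
the set of all elements expressible as a product of at most `n` elements of `K`. -/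
def wordBall {G : Type*} [Group G] (K : Finset G) (n : ℕ) : Set G :=
  {g | ∃ l : List G, l.length ≤ n ∧ (∀ x ∈ l, x ∈ K) ∧ l.prod = g}

section Aux

variable {G : Type*} [Group G] (K : Finset G)

lemma one_mem_wordBall (n : ℕ) : (1 : G) ∈ wordBall K n :=
  ⟨[], by simp, by simp, by simp⟩

lemma wordBall_nonempty (n : ℕ) : (wordBall K n).Nonempty :=
  ⟨1, one_mem_wordBall K n⟩

lemma wordBall_mono {m n : ℕ} (h : m ≤ n) : wordBall K m ⊆ wordBall K n :=
  fun _ ⟨l, hl, hK, hp⟩ => ⟨l, hl.trans h, hK, hp⟩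

lemma smul_wordBall_subset {x : G} (hx : x ∈ K) (n : ℕ) :
    x • wordBall K n ⊆ wordBall K (n + 1) := by
  rintro - ⟨g, ⟨l, hl, hK, rfl⟩, rfl⟩
  refine ⟨x :: l, by simpa using Nat.succ_le_succ hl, ?_, by simp [hx]⟩
  intro y hy
  rcases List.mem_cons.mp hy with rfl | h
  · exact hx
  · exact hK y h

lemma wordBall_succ_subset (n : ℕ) :
    wordBall K (n + 1) ⊆ wordBall K n ∪ ⋃ x ∈ (K : Set G), x • wordBall K n := by
  rintro g ⟨l, hl, hK, rfl⟩
  cases l with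
  | nil => exact Or.inl (one_mem_wordBall K n)
  | cons x t =>
    refine Or.inr ?_
    simp only [Set.mem_iUnion]
    refine ⟨x, hK x (by simp), t.prod, ⟨t, ?_, fun y hy => hK y (by simp [hy]), rfl⟩, by simp⟩
    simpa using Nat.succ_le_succ_iff.mp hl

lemma wordBall_finite (n : ℕ) : (wordBall K n).Finite := by
  induction n with
  | zero =>
    have : wordBall K 0 ⊆ {(1 : G)} := by
      rintro g ⟨l, hl, -, rfl⟩
      simp only [Nat.le_zero, List.length_eq_zero_iff] at hl
      simp [hl]
    exact (Set.finite_singleton _).subset this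
  | succ n ih =>
    refine Set.Finite.subset ?_ (wordBall_succ_subset K n)
    exact ih.union (Set.Finite.biUnion K.finite_toSet fun x _ => ih.smul_set)

lemma one_le_ncard_wordBall (n : ℕ) : 1 ≤ (wordBall K n).ncard :=
  (Set.ncard_pos (wordBall_finite K n)).mpr (wordBall_nonempty K n)

/-- the key combinatorial bound for generators -/
lemma symmDiff_ncard_bound {x : G} (hx : x ∈ K) (hxinv : x⁻¹ ∈ K) (n : ℕ) :
    (symmDiff (x • wordBall K n) (wordBall K n)).ncard
      ≤ 2 * ((wordBall K (n + 1)).ncard - (wordBall K n).ncard) := by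
  set B := wordBall K n with hB
  set B' := wordBall K (n + 1) with hB'
  have hBf : B.Finite := wordBall_finite K n
  have hB'f : B'.Finite := wordBall_finite K (n + 1)
  have hBB' : B ⊆ B' := wordBall_mono K (Nat.le_succ n)
  have hdiff : (B' \ B).ncard = B'.ncard - B.ncard := Set.ncard_diff hBB' hBf
  have h1 : (x • B) \ B ⊆ B' \ B :=
    Set.diff_subset_diff_left (smul_wordBall_subset K hx n)
  have h2 : B \ (x • B) = x • ((x⁻¹ • B) \ B) := by
    rw [Set.smul_set_sdiff, smul_inv_smul]
  have h2' : (B \ (x • B)).ncard = ((x⁻¹ • B) \ B).ncard := by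
    rw [h2, Set.ncard_smul_set]
  have h3 : (x⁻¹ • B) \ B ⊆ B' \ B :=
    Set.diff_subset_diff_left (smul_wordBall_subset K hxinv n)
  have hfin : (B' \ B).Finite := hB'f.diff
  have e1 : ((x • B) \ B).ncard ≤ B'.ncard - B.ncard := by
    rw [← hdiff]; exact Set.ncard_le_ncard h1 hfin
  have e2 : (B \ (x • B)).ncard ≤ B'.ncard - B.ncard := by
    rw [h2', ← hdiff]; exact Set.ncard_le_ncard h3 hfin
  have hsd : symmDiff (x • B) B = ((x • B) \ B) ∪ (B \ (x • B)) := Set.symmDiff_def _ _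
  calc (symmDiff (x • B) B).ncard
      = (((x • B) \ B) ∪ (B \ (x • B))).ncard := by rw [hsd]
    _ ≤ ((x • B) \ B).ncard + (B \ (x • B)).ncard := Set.ncard_union_le _ _
    _ ≤ (B'.ncard - B.ncard) + (B'.ncard - B.ncard) := Nat.add_le_add e1 e2
    _ = 2 * (B'.ncard - B.ncard) := (two_mul _).symm

end Aux

/-- If a group of subexponential growth, then the balls contain a Følner subsequence:
there is a strictly increasing sequence of indices `n_k` such that
`|g B_{n_k} ∆ B_{n_k}| / |B_{n_k}| → 0` for every `g ∈ G`. -/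
theorem subexponential_growth_gives_folner_subsequence
    {G : Type*} [Group G] (K : Finset G)
    (hsym : ∀ k ∈ K, k⁻¹ ∈ K)
    (hgen : Subgroup.closure (K : Set G) = ⊤)
    (hsub : Tendsto (fun n : ℕ => Real.log ((wordBall K n).ncard) / n) atTop (𝓝 0)) :
    ∃ nk : ℕ → ℕ, StrictMono nk ∧
      (∀ k, (wordBall K (nk k)).Finite ∧ (wordBall K (nk k)).Nonempty) ∧
      ∀ g : G,
        Tendsto
          (fun k =>
            ((symmDiff (g • wordBall K (nk k)) (wordBall K (nk k))).ncard : ℝ) /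
              ((wordBall K (nk k)).ncard : ℝ))
          atTop (𝓝 0) := by
  classical
  set a : ℕ → ℕ := fun n => (wordBall K n).ncard with ha
  have ha1 : ∀ n, 1 ≤ a n := fun n => one_le_ncard_wordBall K n
  have ha1R : ∀ n, (1 : ℝ) ≤ (a n : ℝ) := fun n => by exact_mod_cast ha1 n
  have haposR : ∀ n, (0 : ℝ) < (a n : ℝ) := fun n => lt_of_lt_of_le one_pos (ha1R n)
  have hamono : ∀ n, a n ≤ a (n + 1) := fun n =>
    Set.ncard_le_ncard (wordBall_mono K (Nat.le_succ n)) (wordBall_finite K (n + 1))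
  -- Step 1: frequently a(n+1) < (1+ε) a n
  have freq : ∀ ε : ℝ, 0 < ε → ∀ N : ℕ, ∃ n, N ≤ n ∧ ((a (n + 1) : ℝ) < (1 + ε) * a n) := by
    intro ε hε N
    by_contra hcon
    push_neg at hcon
    -- hcon : ∀ n, N ≤ n → (1 + ε) * a n ≤ a (n+1)
    have hε1 : (0 : ℝ) < 1 + ε := by linarith
    have hgrow : ∀ m : ℕ, (1 + ε) ^ m ≤ (a (N + m) : ℝ) := by
      intro m
      induction m with
      | zero => simpa using ha1R N
      | succ m ih =>
        have h1 : (1 + ε) * a (N + m) ≤ a (N + m + 1) := hcon (N + m) (Nat.le_add_right _ _)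
        calc (1 + ε) ^ (m + 1) = (1 + ε) * (1 + ε) ^ m := by ring
          _ ≤ (1 + ε) * a (N + m) := by
              exact mul_le_mul_of_nonneg_left ih hε1.le
          _ ≤ a (N + m + 1) := h1
          _ = a (N + (m + 1)) := by ring_nf
    set L := Real.log (1 + ε) with hL
    have hLpos : 0 < L := Real.log_pos (by linarith)
    have hlog : ∀ n, N ≤ n → ((n : ℝ) - N) * L ≤ Real.log (a n) := by
      intro n hn
      have h1 : (1 + ε) ^ (n - N) ≤ (a n : ℝ) := by
        have := hgrow (n - N)
        rwa [Nat.add_sub_cancel' hn] at this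
      have h2 : Real.log ((1 + ε) ^ (n - N)) ≤ Real.log (a n) :=
        Real.log_le_log (pow_pos hε1 _) h1
      rw [Real.log_pow] at h2
      have : ((n - N : ℕ) : ℝ) = (n : ℝ) - N := by
        rw [Nat.cast_sub hn]
      rwa [this] at h2
    -- eventually log a n / n < L / 2, and pick n ≥ max (2N) 1
    have hev : ∀ᶠ n : ℕ in atTop, Real.log (a n) / n < L / 2 := by
      have : (0 : ℝ) < L / 2 := by linarith
      exact hsub.eventually (Filter.Tendsto.eventually_lt_const this tendsto_id) |>.mono
        (fun n h => h)
    obtain ⟨n, hn1, hn2⟩ := ((eventually_ge_atTop (max (2 * N) 1)).and hev).exists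
    have hnN : N ≤ n := le_trans (by omega) (le_of_max_le_left hn1)
    have hn2N : 2 * N ≤ n := le_of_max_le_left hn1
    have hn0 : (0 : ℝ) < n := by
      have : 1 ≤ n := le_of_max_le_right hn1
      exact_mod_cast this
    have hb := hlog n hnN
    have hsm : Real.log (a n) < L / 2 * n := by
      rw [div_lt_iff₀ hn0] at hn2; exact hn2
    have hcast : (2 * N : ℝ) ≤ n := by exact_mod_cast hn2N
    push_cast at hcast
    nlinarith [hb, hsm, hLpos, hcast]
  -- Step 2: build the subsequence
  have freq' : ∀ k N : ℕ, ∃ n, N ≤ n ∧ ((a (n + 1) : ℝ) < (1 + 1 / (k + 1)) * a n) := by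
    intro k N
    refine freq (1 / (k + 1)) ?_ N
    positivity
  choose F hF1 hF2 using freq'
  set nk : ℕ → ℕ := fun k => Nat.rec (F 0 0) (fun k prev => F (k + 1) (prev + 1)) k with hnk
  have hnk0 : nk 0 = F 0 0 := rfl
  have hnksucc : ∀ k, nk (k + 1) = F (k + 1) (nk k + 1) := fun k => rfl
  have hmono : StrictMono nk := by
    apply strictMono_nat_of_lt_succ
    intro k
    have := hF1 (k + 1) (nk k + 1)
    rw [hnksucc]
    omega
  have hratio : ∀ k, (a (nk k + 1) : ℝ) < (1 + 1 / (k + 1)) * a (nk k) := by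
    intro k
    cases k with
    | zero => exact hF2 0 0
    | succ k => exact hF2 (k + 1) (nk k + 1)
  refine ⟨nk, hmono, fun k => ⟨wordBall_finite K _, wordBall_nonempty K _⟩, ?_⟩
  -- Step 3: the Følner property
  set f : G → ℕ → ℝ := fun g k =>
    ((symmDiff (g • wordBall K (nk k)) (wordBall K (nk k))).ncard : ℝ) /
      ((wordBall K (nk k)).ncard : ℝ) with hf
  have hf_nonneg : ∀ g k, 0 ≤ f g k := fun g k => by positivity
  -- for generators
  have hgenK : ∀ x ∈ K, Tendsto (f x) atTop (𝓝 0) := by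
    intro x hx
    have hbound : ∀ k, f x k ≤ 2 * (1 / (k + 1)) := by
      intro k
      have hnat := symmDiff_ncard_bound K hx (hsym x hx) (nk k)
      have hcast : ((symmDiff (x • wordBall K (nk k)) (wordBall K (nk k))).ncard : ℝ)
          ≤ 2 * ((a (nk k + 1) : ℝ) - a (nk k)) := by
        have h1 : ((symmDiff (x • wordBall K (nk k)) (wordBall K (nk k))).ncard : ℝ)
            ≤ ((2 * (a (nk k + 1) - a (nk k)) : ℕ) : ℝ) := by exact_mod_cast hnat
        rwa [Nat.cast_mul, Nat.cast_sub (hamono (nk k)), Nat.cast_ofNat] at h1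
      have hr := hratio k
      have hA := haposR (nk k)
      rw [hf, div_le_iff₀ hA]
      nlinarith [hcast, hr, hA]
    refine squeeze_zero (hf_nonneg x) hbound ?_
    have h0 : Tendsto (fun k : ℕ => (1 : ℝ) / (k + 1)) atTop (𝓝 0) :=
      tendsto_one_div_add_atTop_nhds_zero_nat
    have := h0.const_mul 2
    simpa using this
  -- extend to all of G by closure induction
  intro g
  have hg : g ∈ Subgroup.closure (K : Set G) := hgen ▸ Subgroup.mem_top g
  refine Subgroup.closure_induction (p := fun g _ => Tendsto (f g) atTop (𝓝 0))
    (fun x hx => hgenK x hx) ?_ ?_ ?_ hg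
  · -- one
    show Tendsto (f 1) atTop (𝓝 0)
    have : f 1 = fun _ => (0 : ℝ) := by
      funext k
      simp [hf, one_smul, symmDiff_self]
    rw [this]
    exact tendsto_const_nhds
  · -- mul
    intro x y hxmem hymem hxt hyt
    show Tendsto (f (x * y)) atTop (𝓝 0)
    have hbound : ∀ k, f (x * y) k ≤ f x k + f y k := by
      intro k
      set B := wordBall K (nk k) with hBdef
      have hBf : B.Finite := wordBall_finite K (nk k)
      have hsub1 : symmDiff ((x * y) • B) B ⊆
          symmDiff ((x * y) • B) (x • B) ∪ symmDiff (x • B) B :=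
        symmDiff_triangle _ _ _
      have hfin : (symmDiff ((x * y) • B) (x • B) ∪ symmDiff (x • B) B).Finite := by
        have h1 : symmDiff ((x * y) • B) (x • B) ⊆ (x * y) • B ∪ x • B :=
          Set.symmDiff_subset_union
        have h2 : symmDiff (x • B) B ⊆ x • B ∪ B := Set.symmDiff_subset_union
        exact Set.Finite.union
          ((hBf.smul_set.union hBf.smul_set).subset h1)
          ((hBf.smul_set.union hBf).subset h2)
      have key : (symmDiff ((x * y) • B) B).ncard
          ≤ (symmDiff (y • B) B).ncard + (symmDiff (x • B) B).ncard := by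
        have e1 : (symmDiff ((x * y) • B) (x • B)).ncard = (symmDiff (y • B) B).ncard := by
          rw [mul_smul, ← Set.smul_set_symmDiff, Set.ncard_smul_set]
        calc (symmDiff ((x * y) • B) B).ncard
            ≤ (symmDiff ((x * y) • B) (x • B) ∪ symmDiff (x • B) B).ncard :=
              Set.ncard_le_ncard hsub1 hfin
          _ ≤ (symmDiff ((x * y) • B) (x • B)).ncard + (symmDiff (x • B) B).ncard :=
              Set.ncard_union_le _ _
          _ = (symmDiff (y • B) B).ncard + (symmDiff (x • B) B).ncard := by rw [e1]
      have hA := haposR (nk k)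
      have hkeyR : ((symmDiff ((x * y) • B) B).ncard : ℝ)
          ≤ ((symmDiff (x • B) B).ncard : ℝ) + ((symmDiff (y • B) B).ncard : ℝ) := by
        have := key; push_cast; exact_mod_cast by linarith [ (by exact_mod_cast key : ((symmDiff ((x * y) • B) B).ncard : ℝ) ≤ ((symmDiff (y • B) B).ncard : ℝ) + ((symmDiff (x • B) B).ncard : ℝ)) ]
      show ((symmDiff ((x * y) • B) B).ncard : ℝ) / (B.ncard : ℝ)
          ≤ ((symmDiff (x • B) B).ncard : ℝ) / (B.ncard : ℝ)
            + ((symmDiff (y • B) B).ncard : ℝ) / (B.ncard : ℝ)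
      rw [← add_div]
      exact div_le_div_of_nonneg_right hkeyR hA.le
    have hsum : Tendsto (fun k => f y k + f x k) atTop (𝓝 0) := by
      have := hyt.add hxt
      simpa using this
    exact squeeze_zero (hf_nonneg _) (fun k => by
      have := hbound k; linarith) hsum
  · -- inv
    intro x hxmem hxt
    show Tendsto (f x⁻¹) atTop (𝓝 0)
    have heq : ∀ k, f x⁻¹ k = f x k := by
      intro k
      set B := wordBall K (nk k) with hBdef
      have : (symmDiff (x⁻¹ • B) B).ncard = (symmDiff (x • B) B).ncard := by
        calc (symmDiff (x⁻¹ • B) B).ncard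
            = (x • symmDiff (x⁻¹ • B) B).ncard := (Set.ncard_smul_set _ _).symm
          _ = (symmDiff (x • x⁻¹ • B) (x • B)).ncard := by rw [Set.smul_set_symmDiff]
          _ = (symmDiff B (x • B)).ncard := by rw [smul_inv_smul]
          _ = (symmDiff (x • B) B).ncard := by rw [symmDiff_comm]
      simp only [hf, ← hBdef, this]
    exact hxt.congr (fun k => (heq k).symm)
end

section
/- If a countable discrete group G satisfies Reiter's condition, then G admits a left-invariant mean: there exists a linear functional m on the space ℓ∞(G) of bounded real-valued functions on G such that m(1) = 1, m(f) ≥ 0 whenever f ≥ 0, and m(g·f) = m(f) for all g ∈ G and f ∈ ℓ∞(G), where (g·f)(h) = f(g⁻¹h). -/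
open Filter Topology

/-- A probability measure on a countable discrete group `G`:
a nonnegative function summing to `1`. -/
def IsProbMeasure {G : Type*} (μ : G → ℝ) : Prop :=
  (∀ g, 0 ≤ μ g) ∧ HasSum μ 1

/-- Reiter's condition: there is a sequence of probability measures `λ_n` on `G` with
`‖g λ_n − λ_n‖ → 0` for every `g ∈ G` (ℓ¹ norm). -/
def ReiterCondition (G : Type*) [Group G] : Prop :=
  ∃ lam : ℕ → G → ℝ, (∀ n, IsProbMeasure (lam n)) ∧
    ∀ g : G, Tendsto (fun n => ∑' h, |lam n (g⁻¹ * h) - lam n h|) atTop (𝓝 0)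

/-- The space `ℓ∞(G)` of bounded real-valued functions on `G`, as a submodule of `G → ℝ`. -/
def boundedFunctions (G : Type*) : Submodule ℝ (G → ℝ) where
  carrier := {f | ∃ C : ℝ, ∀ x, |f x| ≤ C}
  add_mem' := by
    rintro f g ⟨C, hC⟩ ⟨D, hD⟩
    exact ⟨C + D, fun x => (abs_add_le _ _).trans (add_le_add (hC x) (hD x))⟩
  zero_mem' := ⟨0, fun x => by simp⟩
  smul_mem' := by
    rintro c f ⟨C, hC⟩
    exact ⟨|c| * C, fun x => by
      simpa [abs_mul] using mul_le_mul_of_nonneg_left (hC x) (abs_nonneg c)⟩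

lemma aux_summable_mul {G : Type*} (p f : G → ℝ)
    (hps : Summable p) (C : ℝ) (hf : ∀ x, |f x| ≤ C) :
    Summable (fun h => p h * f h) := by
  refine Summable.of_abs (Summable.of_nonneg_of_le (fun h => abs_nonneg _)
    (fun h => ?_) (hps.abs.mul_right C))
  rw [abs_mul]
  exact mul_le_mul_of_nonneg_left (hf h) (abs_nonneg _)

lemma aux_tsum_abs_le {G : Type*} (p f : G → ℝ)
    (hps : Summable p) (C : ℝ) (hf : ∀ x, |f x| ≤ C) :
    |∑' h, p h * f h| ≤ (∑' h, |p h|) * C := by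
  have hs := (aux_summable_mul p f hps C hf).abs
  have h1 : ‖∑' h, p h * f h‖ ≤ ∑' h, ‖p h * f h‖ :=
    norm_tsum_le_tsum_norm (by simpa [Real.norm_eq_abs, abs_mul] using hs)
  simp only [Real.norm_eq_abs] at h1
  calc |∑' h, p h * f h| ≤ ∑' h, |p h * f h| := h1
    _ ≤ (∑' h, |p h|) * C := by
        rw [← tsum_mul_right]
        refine Summable.tsum_le_tsum (fun h => ?_) hs (hps.abs.mul_right C)
        rw [abs_mul]
        exact mul_le_mul_of_nonneg_left (hf h) (abs_nonneg _)

lemma aux_ultra_lim (U : Ultrafilter ℕ) (u : ℕ → ℝ) (C : ℝ) (h : ∀ n, |u n| ≤ C) :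
    ∃ L, Tendsto u ↑U (𝓝 L) := by
  have hK : IsCompact (Set.Icc (-C) C) := isCompact_Icc
  have hle : ↑(U.map u) ≤ 𝓟 (Set.Icc (-C) C) := by
    simp only [Ultrafilter.coe_map, le_principal_iff, mem_map]
    filter_upwards [] with n
    exact abs_le.mp (h n)
  obtain ⟨a, _, ha⟩ := hK.ultrafilter_le_nhds (U.map u) hle
  exact ⟨a, ha⟩

/-- If a countable discrete group satisfies Reiter's condition, then it admits a
left-invariant mean on `ℓ∞(G)`: a positive normalized linear functional invariant under
left translations `(g·f)(h) = f(g⁻¹h)`. -/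
theorem reiter_implies_invariant_mean {G : Type*} [Group G] [Countable G]
    (hReiter : ReiterCondition G) :
    ∃ m : boundedFunctions G →ₗ[ℝ] ℝ,
      (∀ f : boundedFunctions G, (∀ x, (f : G → ℝ) x = 1) → m f = 1) ∧
      (∀ f : boundedFunctions G, (∀ x, 0 ≤ (f : G → ℝ) x) → 0 ≤ m f) ∧
      (∀ (g : G) (f f' : boundedFunctions G),
        (∀ h, (f' : G → ℝ) h = (f : G → ℝ) (g⁻¹ * h)) → m f' = m f) := by
  obtain ⟨lam, hlam, hconv⟩ := hReiter
  have hnn : ∀ n g, 0 ≤ lam n g := fun n => (hlam n).1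
  have hsum : ∀ n, Summable (lam n) := fun n => (hlam n).2.summable
  have htsum : ∀ n, ∑' h, lam n h = 1 := fun n => (hlam n).2.tsum_eq
  have habs : ∀ n, (fun h => |lam n h|) = lam n := by
    intro n; funext h; exact abs_of_nonneg (hnn n h)
  set U : Ultrafilter ℕ := Ultrafilter.of atTop with hUdef
  have hU : ↑U ≤ (atTop : Filter ℕ) := Ultrafilter.of_le atTop
  set Λ : boundedFunctions G → ℕ → ℝ :=
    fun f n => ∑' h, lam n h * (f : G → ℝ) h with hΛ
  have key : ∀ f : boundedFunctions G, ∃ L, Tendsto (Λ f) ↑U (𝓝 L) := by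
    intro f
    obtain ⟨C, hC⟩ := f.2
    refine aux_ultra_lim U (Λ f) C (fun n => ?_)
    have := aux_tsum_abs_le (lam n) (f : G → ℝ) (hsum n) C hC
    rwa [habs n, htsum n, one_mul] at this
  choose m0 hm0 using key
  have hsummul : ∀ (f : boundedFunctions G) n, Summable (fun h => lam n h * (f : G → ℝ) h) := by
    intro f n
    obtain ⟨C, hC⟩ := f.2
    exact aux_summable_mul (lam n) _ (hsum n) C hC
  refine ⟨{ toFun := m0, map_add' := ?_, map_smul' := ?_ }, ?_, ?_, ?_⟩
  · intro f f'
    refine tendsto_nhds_unique (hm0 (f + f')) ?_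
    have h2 := (hm0 f).add (hm0 f')
    convert h2 using 1
    funext n
    simp only [hΛ, Submodule.coe_add, Pi.add_apply]
    rw [← Summable.tsum_add (hsummul f n) (hsummul f' n)]
    congr 1; funext h; ring
  · intro c f
    refine tendsto_nhds_unique (hm0 (c • f)) ?_
    have h2 := (hm0 f).const_mul c
    convert h2 using 1
    funext n
    simp only [hΛ, Submodule.coe_smul, Pi.smul_apply, smul_eq_mul]
    rw [← tsum_mul_left]
    congr 1; funext h; ring
    simp
  · intro f hf1
    refine tendsto_nhds_unique (hm0 f) ?_
    have : Λ f = fun _ => (1 : ℝ) := by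
      funext n
      simp only [hΛ]
      simp_rw [hf1, mul_one]
      exact htsum n
    rw [this]
    exact tendsto_const_nhds
  · intro f hf0
    refine ge_of_tendsto (hm0 f) ?_
    filter_upwards [] with n
    exact tsum_nonneg fun h => mul_nonneg (hnn n h) (hf0 h)
  · intro g f f' hff'
    obtain ⟨C, hC⟩ := f.2
    have hsg : ∀ n, Summable (fun h => lam n (g * h)) := by
      intro n
      exact (hsum n).comp_injective (mul_right_injective g)
    have hre : ∀ n, Λ f' n = ∑' h, lam n (g * h) * (f : G → ℝ) h := by
      intro n
      have he := (Equiv.mulLeft g).tsum_eq (fun h => lam n h * (f' : G → ℝ) h)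
      simp only [Equiv.coe_mulLeft] at he
      rw [hΛ]
      simp only
      rw [← he]
      congr 1; funext h
      rw [hff' (g * h), inv_mul_cancel_left]
    have hdiff : ∀ n, Λ f' n - Λ f n = ∑' h, (lam n (g * h) - lam n h) * (f : G → ℝ) h := by
      intro n
      rw [hre n, hΛ]
      simp only
      rw [← Summable.tsum_sub (aux_summable_mul _ _ (hsg n) C hC) (hsummul f n)]
      congr 1; funext h; ring
    have hg' := hconv g⁻¹
    simp only [inv_inv] at hg'
    have htends0 : Tendsto (fun n => Λ f' n - Λ f n) atTop (𝓝 0) := by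
      have hb : ∀ n, |Λ f' n - Λ f n| ≤ (∑' h, |lam n (g * h) - lam n h|) * C := by
        intro n
        rw [hdiff n]
        exact aux_tsum_abs_le _ _ (((hsg n)).sub (hsum n)) C hC
      have hlim : Tendsto (fun n => (∑' h, |lam n (g * h) - lam n h|) * C) atTop (𝓝 0) := by
        simpa using hg'.mul_const C
      exact squeeze_zero_norm (by simpa [Real.norm_eq_abs] using hb) hlim
    have h2 : Tendsto (Λ f') ↑U (𝓝 (m0 f)) := by
      have := (htends0.mono_left hU).add (hm0 f)
      simpa using this
    exact tendsto_nhds_unique (hm0 f') h2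
end

section
/- Let G be a countable discrete group satisfying Reiter's condition, and let G act by homeomorphisms on a nonempty compact metrizable topological space X. Then there exists a G-invariant Borel probability measure on X. -/
open Filter Topology MeasureTheory

/-- A countable discrete group satisfying Reiter's condition acting by homeomorphisms on a
nonempty compact metrizable space admits an invariant Borel probability measure. -/
theorem reiter_implies_invariant_measure {G : Type*} [Group G] [Countable G]
    (hReiter : ReiterCondition G)
    (X : Type*) [TopologicalSpace X] [CompactSpace X] [TopologicalSpace.MetrizableSpace X]
    [Nonempty X] [MeasurableSpace X] [BorelSpace X]
    [MulAction G X] (hcont : ∀ g : G, Continuous (fun x : X => g • x)) :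
    ∃ ν : Measure X, IsProbabilityMeasure ν ∧
      ∀ g : G, Measure.map (fun x : X => g • x) ν = ν := by
  classical
  haveI : T2Space X := by
    letI := TopologicalSpace.metrizableSpaceMetric X
    infer_instance
  obtain ⟨lam, hprob, hreiter⟩ := hReiter
  obtain ⟨x0⟩ := (inferInstance : Nonempty X)
  have hnn : ∀ n g, 0 ≤ lam n g := fun n => (hprob n).1
  have hsumm : ∀ n, Summable (lam n) := fun n => (hprob n).2.summable
  have htsum : ∀ n, ∑' h, lam n h = 1 := fun n => (hprob n).2.tsum_eq
  -- the "measure" of a set `A` under `ν_n = ∑ lam n h • δ_{h • x0}`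
  set c : ℕ → Set X → ℝ :=
    fun n A => ∑' h : G, Set.indicator ((fun h : G => h • x0) ⁻¹' A) (lam n) h with hc
  have hind_nn : ∀ n (A : Set X) (h : G),
      0 ≤ Set.indicator ((fun h : G => h • x0) ⁻¹' A) (lam n) h :=
    fun n A h => Set.indicator_nonneg (fun g _ => hnn n g) h
  have hcsumm : ∀ n (A : Set X),
      Summable (Set.indicator ((fun h : G => h • x0) ⁻¹' A) (lam n)) :=
    fun n A => (hsumm n).indicator _
  have hc0 : ∀ n (A : Set X), 0 ≤ c n A := fun n A => tsum_nonneg (hind_nn n A)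
  have hc1 : ∀ n (A : Set X), c n A ≤ 1 := by
    intro n A
    rw [← htsum n]
    exact Summable.tsum_le_tsum (fun h => Set.indicator_le_self' (fun g _ => hnn n g) h)
      (hcsumm n A) (hsumm n)
  have hcuniv : ∀ n, c n Set.univ = 1 := by
    intro n
    simp only [hc, Set.preimage_univ, Set.indicator_univ]
    exact htsum n
  have hcmono : ∀ n (A B : Set X), A ⊆ B → c n A ≤ c n B := by
    intro n A B hAB
    exact Summable.tsum_le_tsum
      (fun h => Set.indicator_le_indicator_of_subset (Set.preimage_mono hAB)
        (fun g => hnn n g) h) (hcsumm n A) (hcsumm n B)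
  have hcadd : ∀ n (A B : Set X), Disjoint A B → c n (A ∪ B) = c n A + c n B := by
    intro n A B hAB
    have hdis : Disjoint ((fun h : G => h • x0) ⁻¹' A) ((fun h : G => h • x0) ⁻¹' B) :=
      hAB.preimage _
    simp only [hc, Set.preimage_union, Set.indicator_union_of_disjoint hdis]
    exact Summable.tsum_add (hcsumm n A) (hcsumm n B)
  have hcsub : ∀ n (A B : Set X), c n (A ∪ B) ≤ c n A + c n B := by
    intro n A B
    have hle : ∀ h : G,
        Set.indicator ((fun h : G => h • x0) ⁻¹' (A ∪ B)) (lam n) h ≤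
          Set.indicator ((fun h : G => h • x0) ⁻¹' A) (lam n) h +
            Set.indicator ((fun h : G => h • x0) ⁻¹' B) (lam n) h := by
      intro h
      by_cases hA : h ∈ (fun h : G => h • x0) ⁻¹' A
      · calc Set.indicator ((fun h : G => h • x0) ⁻¹' (A ∪ B)) (lam n) h
            ≤ lam n h := Set.indicator_le_self' (fun g _ => hnn n g) h
          _ = Set.indicator ((fun h : G => h • x0) ⁻¹' A) (lam n) h := by
              rw [Set.indicator_of_mem hA]
          _ ≤ _ := le_add_of_nonneg_right (hind_nn n B h)
      · by_cases hB : h ∈ (fun h : G => h • x0) ⁻¹' B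
        · calc Set.indicator ((fun h : G => h • x0) ⁻¹' (A ∪ B)) (lam n) h
              ≤ lam n h := Set.indicator_le_self' (fun g _ => hnn n g) h
            _ = Set.indicator ((fun h : G => h • x0) ⁻¹' B) (lam n) h := by
                rw [Set.indicator_of_mem hB]
            _ ≤ _ := le_add_of_nonneg_left (hind_nn n A h)
        · have hAB : h ∉ (fun h : G => h • x0) ⁻¹' (A ∪ B) := by
            simp only [Set.preimage_union, Set.mem_union] at *
            tauto
          rw [Set.indicator_of_notMem hAB]
          exact add_nonneg (hind_nn n A h) (hind_nn n B h)
    calc c n (A ∪ B) ≤ ∑' h : G,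
          (Set.indicator ((fun h : G => h • x0) ⁻¹' A) (lam n) h +
            Set.indicator ((fun h : G => h • x0) ⁻¹' B) (lam n) h) :=
        Summable.tsum_le_tsum hle (hcsumm n _) ((hcsumm n A).add (hcsumm n B))
      _ = c n A + c n B := Summable.tsum_add (hcsumm n A) (hcsumm n B)
  -- ultrafilter limit
  set u : Ultrafilter ℕ := Ultrafilter.of atTop with hu
  have hu_le : (u : Filter ℕ) ≤ atTop := Ultrafilter.of_le _
  have exlim : ∀ A : Set X, ∃ x ∈ Set.Icc (0:ℝ) 1,
      Tendsto (fun n => c n A) u (𝓝 x) := by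
    intro A
    have hmem : (Ultrafilter.map (fun n => c n A) u : Filter ℝ) ≤ 𝓟 (Set.Icc (0:ℝ) 1) := by
      rw [Ultrafilter.coe_map, Filter.le_principal_iff, Filter.mem_map]
      exact Filter.univ_mem' (fun n => Set.mem_preimage.mpr ⟨hc0 n A, hc1 n A⟩)
    obtain ⟨x, hx, hle⟩ := (isCompact_Icc (a := (0:ℝ)) (b := 1)).ultrafilter_le_nhds
      (Ultrafilter.map (fun n => c n A) u) hmem
    exact ⟨x, hx, hle⟩
  choose L hL01 hLtendsto using exlim
  haveI : (u : Filter ℕ).NeBot := Ultrafilter.neBot u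
  -- limits inherit the properties of `c`
  have hLuniv : L Set.univ = 1 := by
    refine tendsto_nhds_unique (hLtendsto Set.univ) ?_
    simpa only [hcuniv] using (tendsto_const_nhds : Tendsto (fun _ : ℕ => (1:ℝ)) u (𝓝 1))
  have hLmono : ∀ (A B : Set X), A ⊆ B → L A ≤ L B := fun A B hAB =>
    le_of_tendsto_of_tendsto' (hLtendsto A) (hLtendsto B) (fun n => hcmono n A B hAB)
  have hLadd : ∀ (A B : Set X), Disjoint A B → L (A ∪ B) = L A + L B := by
    intro A B hAB
    refine tendsto_nhds_unique (hLtendsto (A ∪ B)) ?_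
    have := (hLtendsto A).add (hLtendsto B)
    simpa only [← hcadd _ A B hAB] using this
  have hLsub : ∀ (A B : Set X), L (A ∪ B) ≤ L A + L B := by
    intro A B
    exact le_of_tendsto_of_tendsto' (hLtendsto (A ∪ B)) ((hLtendsto A).add (hLtendsto B))
      (fun n => hcsub n A B)
  -- the content
  set κ : Content X :=
    { toFun := fun K => Real.toNNReal (L (K : Set X))
      mono' := fun K₁ K₂ h => Real.toNNReal_mono (hLmono _ _ h)
      sup_disjoint' := by
        intro K₁ K₂ hd _ _
        simp only [TopologicalSpace.Compacts.coe_sup]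
        rw [hLadd _ _ hd, Real.toNNReal_add (hL01 _).1 (hL01 _).1]
      sup_le' := by
        intro K₁ K₂
        simp only [TopologicalSpace.Compacts.coe_sup]
        exact le_trans (Real.toNNReal_mono (hLsub _ _)) Real.toNNReal_add_le } with hκ
  -- invariance of the content under the action
  have hKinv : ∀ (g : G) (K : Set X), L ((fun x : X => g • x) '' K) = L K := by
    intro g K
    -- rewrite `c n (g '' K)` via reindexing
    have hrew : ∀ n, c n ((fun x : X => g • x) '' K) =
        ∑' h : G, Set.indicator ((fun h : G => h • x0) ⁻¹' K) (fun h => lam n (g * h)) h := by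
      intro n
      have hpre : (fun h : G => h • x0) ⁻¹' ((fun x : X => g • x) '' K) =
          (fun h : G => g⁻¹ * h) ⁻¹' ((fun h : G => h • x0) ⁻¹' K) := by
        ext h
        simp only [Set.mem_preimage, Set.mem_image]
        constructor
        · rintro ⟨y, hy, hxy⟩
          have : y = (g⁻¹ * h) • x0 := by
            rw [mul_smul]
            rw [← hxy]
            simp
          rwa [this] at hy
        · intro hy
          exact ⟨(g⁻¹ * h) • x0, hy, by rw [← mul_smul]; simp⟩
      rw [hc]
      simp only [hpre]
      rw [← Equiv.tsum_eq (Equiv.mulLeft g)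
        (Set.indicator ((fun h : G => g⁻¹ * h) ⁻¹' ((fun h : G => h • x0) ⁻¹' K)) (lam n))]
      congr 1
      ext h
      simp only [Equiv.coe_mulLeft, Set.indicator, Set.mem_preimage, inv_mul_cancel_left]
    -- the ℓ¹ bound
    have hbound : ∀ n, |c n ((fun x : X => g • x) '' K) - c n K| ≤
        ∑' h : G, |lam n (g * h) - lam n h| := by
      intro n
      have hsumm' : Summable (fun h : G => lam n (g * h)) :=
        (Equiv.summable_iff (Equiv.mulLeft g)).mpr (hsumm n)
      have hsummInd : Summable
          (Set.indicator ((fun h : G => h • x0) ⁻¹' K) (fun h => lam n (g * h))) :=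
        hsumm'.indicator _
      have hdiffsumm : Summable (fun h : G => lam n (g * h) - lam n h) :=
        hsumm'.sub (hsumm n)
      rw [hrew n, hc, ← Summable.tsum_sub hsummInd (hcsumm n K)]
      calc |∑' h : G, (Set.indicator ((fun h : G => h • x0) ⁻¹' K) (fun h => lam n (g * h)) h -
              Set.indicator ((fun h : G => h • x0) ⁻¹' K) (lam n) h)|
          ≤ ∑' h : G, |Set.indicator ((fun h : G => h • x0) ⁻¹' K) (fun h => lam n (g * h)) h -
              Set.indicator ((fun h : G => h • x0) ⁻¹' K) (lam n) h| := by
            have := norm_tsum_le_tsum_norm (f := fun h : G =>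
              Set.indicator ((fun h : G => h • x0) ⁻¹' K) (fun h => lam n (g * h)) h -
                Set.indicator ((fun h : G => h • x0) ⁻¹' K) (lam n) h) ?_
            · simpa only [Real.norm_eq_abs] using this
            · simp only [Real.norm_eq_abs]
              refine Summable.of_nonneg_of_le (fun h => abs_nonneg _) (fun h => ?_)
                (hdiffsumm.abs)
              by_cases hm : h ∈ (fun h : G => h • x0) ⁻¹' K
              · simp [Set.indicator_of_mem hm]
              · simp [Set.indicator_of_notMem hm]
        _ ≤ ∑' h : G, |lam n (g * h) - lam n h| := by
            refine Summable.tsum_le_tsum (fun h => ?_) ?_ hdiffsumm.abs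
            · by_cases hm : h ∈ (fun h : G => h • x0) ⁻¹' K
              · simp [Set.indicator_of_mem hm]
              · simp [Set.indicator_of_notMem hm]
            · refine Summable.of_nonneg_of_le (fun h => abs_nonneg _) (fun h => ?_)
                (hdiffsumm.abs)
              by_cases hm : h ∈ (fun h : G => h • x0) ⁻¹' K
              · simp [Set.indicator_of_mem hm]
              · simp [Set.indicator_of_notMem hm]
    -- Reiter : the bound tends to 0
    have hten : Tendsto (fun n => ∑' h : G, |lam n (g * h) - lam n h|) atTop (𝓝 0) := by
      have := hreiter g⁻¹
      simpa only [inv_inv] using this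
    have hdiff : Tendsto (fun n => c n ((fun x : X => g • x) '' K) - c n K) u (𝓝 0) := by
      have h1 : Tendsto (fun n => |c n ((fun x : X => g • x) '' K) - c n K|) atTop (𝓝 0) := by
        refine squeeze_zero (fun n => abs_nonneg _) hbound hten
      have h2 : Tendsto (fun n => c n ((fun x : X => g • x) '' K) - c n K) atTop (𝓝 0) :=
        (tendsto_zero_iff_abs_tendsto_zero _).mpr h1
      exact h2.mono_left hu_le
    have h3 : Tendsto (fun n => c n ((fun x : X => g • x) '' K) - c n K) u
        (𝓝 (L ((fun x : X => g • x) '' K) - L K)) :=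
      (hLtendsto _).sub (hLtendsto K)
    have := tendsto_nhds_unique h3 hdiff
    linarith [this]
  -- the measure
  refine ⟨κ.measure, ?_, ?_⟩
  · constructor
    rw [Content.measure_apply κ MeasurableSet.univ,
      Content.outerMeasure_of_isOpen κ Set.univ isOpen_univ,
      Content.innerContent_of_isCompact κ isCompact_univ isOpen_univ]
    show ((Real.toNNReal (L (Set.univ : Set X)) : NNReal) : ENNReal) = 1
    rw [hLuniv]
    simp
  · intro g
    have hmg : Measurable (fun x : X => g • x) := (hcont g).measurable
    set e : X ≃ₜ X :=
      { toFun := fun x => g • x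
        invFun := fun x => g⁻¹ • x
        left_inv := fun x => by simp [← mul_smul]
        right_inv := fun x => by simp [← mul_smul]
        continuous_toFun := hcont g
        continuous_invFun := hcont g⁻¹ } with he
    have hκinv : ∀ ⦃K : TopologicalSpace.Compacts X⦄,
        (fun s => ((κ.toFun s : NNReal) : ENNReal)) (TopologicalSpace.Compacts.map (⇑e) e.continuous K)
          = (fun s => ((κ.toFun s : NNReal) : ENNReal)) K := by
      intro K
      simp only [hκ]
      norm_cast
      congr 1
      have : ((TopologicalSpace.Compacts.map (⇑e) e.continuous K : Set X)) =
          (fun x : X => g • x) '' (K : Set X) := by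
        rw [TopologicalSpace.Compacts.coe_map]
        rfl
      rw [this, hKinv g]
    refine Measure.ext fun s hs => ?_
    rw [Measure.map_apply hmg hs, Content.measure_apply κ (hs.preimage hmg),
      Content.measure_apply κ hs]
    have := Content.outerMeasure_preimage κ e hκinv s
    exact this
end

section
/- Let G be a countable discrete group satisfying Reiter's condition, let E be a Hausdorff locally convex real topological vector space, let K ⊆ E be a nonempty compact convex subset, and let G act on K by continuous affine maps. Then the action has a fixed point: there exists p ∈ K with g·p = p for all g ∈ G. -/
open Filter Topology

lemma act_sum' {E : Type*} [AddCommGroup E] [Module ℝ E] {K : Set E} (hconv : Convex ℝ K)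
    (T : E → E)
    (haff : ∀ x ∈ K, ∀ y ∈ K, ∀ t : ℝ, 0 ≤ t → t ≤ 1 →
      T (t • x + (1 - t) • y) = t • T x + (1 - t) • T y)
    {ι : Type*} (x : ι → E) :
    ∀ (F : Finset ι) (w : ι → ℝ), (∀ i ∈ F, 0 ≤ w i) → (∑ i ∈ F, w i) = 1 →
      (∀ i ∈ F, x i ∈ K) →
      T (∑ i ∈ F, w i • x i) = ∑ i ∈ F, w i • T (x i) := by
  classical
  intro F
  induction F using Finset.induction_on with
  | empty => intro w _ hw1 _; simp at hw1
  | @insert a s ha ih =>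
    intro w hw hw1 hx
    rw [Finset.sum_insert ha, Finset.sum_insert ha]
    have hwa : 0 ≤ w a := hw a (Finset.mem_insert_self a s)
    have hws : ∀ i ∈ s, 0 ≤ w i := fun i hi => hw i (Finset.mem_insert_of_mem hi)
    have hxs : ∀ i ∈ s, x i ∈ K := fun i hi => hx i (Finset.mem_insert_of_mem hi)
    have hxa : x a ∈ K := hx a (Finset.mem_insert_self a s)
    have hsum : w a + ∑ i ∈ s, w i = 1 := by rw [← Finset.sum_insert ha]; exact hw1
    set t : ℝ := ∑ i ∈ s, w i with ht
    have htnn : 0 ≤ t := Finset.sum_nonneg hws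
    rcases eq_or_lt_of_le htnn with h0 | hpos
    · have hz : ∀ i ∈ s, w i = 0 :=
        fun i hi => (Finset.sum_eq_zero_iff_of_nonneg hws).1 h0.symm i hi
      have hwa1 : w a = 1 := by rw [← h0] at hsum; linarith
      have h1 : ∑ i ∈ s, w i • x i = 0 :=
        Finset.sum_eq_zero fun i hi => by rw [hz i hi, zero_smul]
      have h2 : ∑ i ∈ s, w i • T (x i) = 0 :=
        Finset.sum_eq_zero fun i hi => by rw [hz i hi, zero_smul]
      rw [h1, h2, hwa1, add_zero, add_zero, one_smul, one_smul]
    · have htne : t ≠ 0 := ne_of_gt hpos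
      have hwa1 : (1 : ℝ) - w a = t := by linarith
      set z : E := ∑ i ∈ s, (w i / t) • x i with hz
      have hsum1 : ∑ i ∈ s, w i / t = 1 := by rw [← Finset.sum_div, div_self htne]
      have hzK : z ∈ K := hconv.sum_mem (fun i hi => div_nonneg (hws i hi) htnn) hsum1 hxs
      have hts : t • z = ∑ i ∈ s, w i • x i := by
        rw [hz, Finset.smul_sum]
        refine Finset.sum_congr rfl fun i hi => ?_
        rw [smul_smul, mul_div_cancel₀ _ htne]
      have hts' : t • T z = ∑ i ∈ s, w i • T (x i) := by
        rw [ih (fun i => w i / t) (fun i hi => div_nonneg (hws i hi) htnn) hsum1 hxs,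
          Finset.smul_sum]
        refine Finset.sum_congr rfl fun i hi => ?_
        rw [smul_smul, mul_div_cancel₀ _ htne]
      calc T (w a • x a + ∑ i ∈ s, w i • x i)
          = T (w a • x a + (1 - w a) • z) := by rw [hwa1, hts]
        _ = w a • T (x a) + (1 - w a) • T z :=
            haff (x a) hxa z hzK (w a) hwa (by linarith)
        _ = w a • T (x a) + ∑ i ∈ s, w i • T (x i) := by rw [hwa1, hts']

/-- A countable discrete group satisfying Reiter's condition which acts by continuous
affine maps on a nonempty compact convex subset of a Hausdorff locally convex real
topological vector space has a fixed point. -/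
theorem reiter_implies_fixed_point {G : Type*} [Group G] [Countable G]
    (hReiter : ReiterCondition G)
    {E : Type*} [AddCommGroup E] [Module ℝ E] [TopologicalSpace E]
    [IsTopologicalAddGroup E] [ContinuousSMul ℝ E] [T2Space E] [LocallyConvexSpace ℝ E]
    (K : Set E) (hne : K.Nonempty) (hcomp : IsCompact K) (hconv : Convex ℝ K)
    (act : G → E → E)
    (hmaps : ∀ g : G, Set.MapsTo (act g) K K)
    (hone : ∀ x ∈ K, act 1 x = x)
    (hmul : ∀ g h : G, ∀ x ∈ K, act (g * h) x = act g (act h x))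
    (hcont : ∀ g : G, ContinuousOn (act g) K)
    (haffine : ∀ g : G, ∀ x ∈ K, ∀ y ∈ K, ∀ t : ℝ, 0 ≤ t → t ≤ 1 →
      act g (t • x + (1 - t) • y) = t • act g x + (1 - t) • act g y) :
    ∃ p ∈ K, ∀ g : G, act g p = p := by
  classical
  obtain ⟨lam, hprob, hlim⟩ := hReiter
  obtain ⟨x₀, hx₀⟩ := hne
  set δ : ℕ → ℝ := fun n => 1 / (2 * ((n : ℝ) + 1)) with hδ_def
  have hδpos : ∀ n, 0 < δ n := by
    intro n
    have : (0:ℝ) < 2 * ((n:ℝ) + 1) := by positivity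
    exact div_pos one_pos this
  have hδhalf : ∀ n, δ n ≤ 1/2 := by
    intro n
    apply div_le_div_of_nonneg_left one_pos.le (by norm_num)
    · nlinarith [Nat.cast_nonneg (α := ℝ) n]
  have hδten : Tendsto δ atTop (𝓝 0) := by
    have h1 : Tendsto (fun n : ℕ => 1 / ((n : ℝ) + 1)) atTop (𝓝 0) :=
      tendsto_one_div_add_atTop_nhds_zero_nat
    have : δ = fun n : ℕ => (1/2) * (1 / ((n : ℝ) + 1)) := by
      funext n
      rw [hδ_def]
      have hne : ((n : ℝ) + 1) ≠ 0 := by positivity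
      field_simp
    rw [this]
    simpa using h1.const_mul (1/2 : ℝ)
  have hFex : ∀ n : ℕ, ∃ F : Finset G, 1 - δ n < ∑ h ∈ F, lam n h := by
    intro n
    have h := (hprob n).2
    have hlt : (1 : ℝ) - δ n < 1 := by linarith [hδpos n]
    exact (h.eventually (eventually_gt_nhds hlt)).exists
  choose F hF using hFex
  set s : ℕ → ℝ := fun n => ∑ h ∈ F n, lam n h with hs_def
  have hsum_le : ∀ n (S : Finset G), ∑ h ∈ S, lam n h ≤ 1 :=
    fun n S => sum_le_hasSum S (fun i _ => (hprob n).1 i) (hprob n).2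
  have hs_half : ∀ n, (1:ℝ)/2 ≤ s n := by
    intro n
    have h1 := hF n
    have h2 := hδhalf n
    simp only [hs_def]
    linarith
  have hs_pos : ∀ n, 0 < s n := fun n => lt_of_lt_of_le (by norm_num) (hs_half n)
  have hs_inv : ∀ n, (s n)⁻¹ ≤ 2 := by
    intro n
    rw [show (2:ℝ) = ((1:ℝ)/2)⁻¹ by norm_num]
    exact inv_anti₀ (by norm_num) (hs_half n)
  set q : ℕ → E := fun n => ∑ h ∈ F n, ((s n)⁻¹ * lam n h) • act h x₀ with hq_def
  have hwnn : ∀ n, ∀ h ∈ F n, 0 ≤ (s n)⁻¹ * lam n h :=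
    fun n h _ => mul_nonneg (inv_nonneg.2 (hs_pos n).le) ((hprob n).1 h)
  have hw1 : ∀ n, ∑ h ∈ F n, (s n)⁻¹ * lam n h = 1 := by
    intro n
    rw [← Finset.mul_sum]
    exact inv_mul_cancel₀ (hs_pos n).ne'
  have hqK : ∀ n, q n ∈ K :=
    fun n => hconv.sum_mem (hwnn n) (hw1 n) (fun h _ => hmaps h hx₀)
  have hmapK : map q atTop ≤ 𝓟 K := tendsto_principal.2 (Eventually.of_forall hqK)
  obtain ⟨p, hpK, hp⟩ := hcomp hmapK
  refine ⟨p, hpK, fun g => ?_⟩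
  have key : ∀ f : E →L[ℝ] ℝ, f (act g p) = f p := by
    intro f
    obtain ⟨z, hzK, hz⟩ := hcomp.exists_isMaxOn ⟨x₀, hx₀⟩
      ((continuous_abs.comp f.continuous).continuousOn)
    set C := |f z| with hC
    have hCnn : (0:ℝ) ≤ C := abs_nonneg _
    set u : G → ℝ := fun h => f (act h x₀) with hu
    have huC : ∀ h : G, |u h| ≤ C := fun h => hz (hmaps h hx₀)
    set ε : ℕ → ℝ := fun n => ∑' h, |lam n (g⁻¹ * h) - lam n h| with hε_def
    have hsummable : ∀ n, Summable (lam n) := fun n => (hprob n).2.summable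
    have hsummable' : ∀ n, Summable (fun h => lam n (g⁻¹ * h)) :=
      fun n => (Equiv.mulLeft g⁻¹).summable_iff.2 (hsummable n)
    have habs : ∀ n, Summable (fun h => |lam n (g⁻¹ * h) - lam n h|) :=
      fun n => ((hsummable' n).sub (hsummable n)).abs
    have hεnn : ∀ n, 0 ≤ ε n := fun n => tsum_nonneg (fun h => abs_nonneg _)
    -- main estimate
    have hA : ∀ n, |f (act g (q n)) - f (q n)| ≤ 4 * C * (ε n + δ n) := by
      intro n
      set F' : Finset G := (F n).map ⟨fun h => g * h, mul_right_injective g⟩ with hF'_def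
      have hBmap : ∑ h ∈ F n, lam n h * u (g * h) = ∑ k ∈ F', lam n (g⁻¹ * k) * u k := by
        rw [hF'_def, Finset.sum_map]
        refine Finset.sum_congr rfl fun h _ => ?_
        simp [inv_mul_cancel_left]
      have hsmap : ∑ k ∈ F', lam n (g⁻¹ * k) = s n := by
        rw [hF'_def, Finset.sum_map, hs_def]
        refine Finset.sum_congr rfl fun h _ => ?_
        simp [inv_mul_cancel_left]
      have hεF' : ∑ k ∈ F', |lam n (g⁻¹ * k) - lam n k| ≤ ε n :=
        Summable.sum_le_tsum F' (fun k _ => abs_nonneg _) (habs n)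
      -- |B - B'|
      have h1 : |∑ k ∈ F', lam n (g⁻¹ * k) * u k - ∑ k ∈ F', lam n k * u k| ≤ C * ε n := by
        rw [← Finset.sum_sub_distrib]
        refine (Finset.abs_sum_le_sum_abs _ _).trans ?_
        have hterm : ∀ k ∈ F', |lam n (g⁻¹ * k) * u k - lam n k * u k|
            ≤ C * |lam n (g⁻¹ * k) - lam n k| := by
          intro k _
          rw [← sub_mul, abs_mul, mul_comm]
          exact mul_le_mul_of_nonneg_right (huC k) (abs_nonneg _)
        refine (Finset.sum_le_sum hterm).trans ?_
        rw [← Finset.mul_sum]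
        exact mul_le_mul_of_nonneg_left hεF' hCnn
      -- mass bounds
      have hs'ge : s n - ε n ≤ ∑ k ∈ F', lam n k := by
        have h2 : ∀ k ∈ F', lam n (g⁻¹ * k) ≤ lam n k + |lam n (g⁻¹ * k) - lam n k| := by
          intro k _
          have := le_abs_self (lam n (g⁻¹ * k) - lam n k)
          linarith
        have := Finset.sum_le_sum h2
        rw [hsmap, Finset.sum_add_distrib] at this
        linarith [hεF']
      have hsdiff1 : ∑ k ∈ F' \ F n, lam n k ≤ 1 - s n := by
        have hu1 : ∑ k ∈ F n, lam n k + ∑ k ∈ F' \ F n, lam n k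
            = ∑ k ∈ F n ∪ F', lam n k := by
          rw [← Finset.sum_union Finset.disjoint_sdiff, Finset.union_sdiff_self_eq_union]
        have := hsum_le n (F n ∪ F')
        rw [← hu1] at this
        simp only [hs_def]
        linarith
      have hsdiff2 : ∑ k ∈ F n \ F', lam n k ≤ 1 - s n + ε n := by
        have hu1 : ∑ k ∈ F', lam n k + ∑ k ∈ F n \ F', lam n k
            = ∑ k ∈ F' ∪ F n, lam n k := by
          rw [← Finset.sum_union Finset.disjoint_sdiff, Finset.union_sdiff_self_eq_union]
        have := hsum_le n (F' ∪ F n)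
        rw [← hu1] at this
        linarith [hs'ge]
      -- |B' - D|
      have h2 : |∑ k ∈ F', lam n k * u k - ∑ k ∈ F n, lam n k * u k|
          ≤ C * ((1 - s n) + (1 - s n + ε n)) := by
        have hd1 : ∑ k ∈ F' \ (F' ∩ F n), lam n k * u k + ∑ k ∈ F' ∩ F n, lam n k * u k
            = ∑ k ∈ F', lam n k * u k := Finset.sum_sdiff Finset.inter_subset_left
        have hd2 : ∑ k ∈ F n \ (F' ∩ F n), lam n k * u k + ∑ k ∈ F' ∩ F n, lam n k * u k
            = ∑ k ∈ F n, lam n k * u k := by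
          rw [Finset.inter_comm]
          exact Finset.sum_sdiff Finset.inter_subset_left
        have hdi1 : F' \ (F' ∩ F n) = F' \ F n := by
          rw [Finset.sdiff_inter_self_left]
        have hdi2 : F n \ (F' ∩ F n) = F n \ F' := by
          rw [Finset.inter_comm, Finset.sdiff_inter_self_left]
        have heq : ∑ k ∈ F', lam n k * u k - ∑ k ∈ F n, lam n k * u k
            = ∑ k ∈ F' \ F n, lam n k * u k - ∑ k ∈ F n \ F', lam n k * u k := by
          rw [← hd1, ← hd2, hdi1, hdi2]; ring
        rw [heq]
        have hb1 : |∑ k ∈ F' \ F n, lam n k * u k| ≤ C * (1 - s n) := by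
          refine (Finset.abs_sum_le_sum_abs _ _).trans ?_
          have : ∀ k ∈ F' \ F n, |lam n k * u k| ≤ C * lam n k := by
            intro k _
            rw [abs_mul, abs_of_nonneg ((hprob n).1 k), mul_comm]
            exact mul_le_mul_of_nonneg_right (huC k) ((hprob n).1 k)
          refine (Finset.sum_le_sum this).trans ?_
          rw [← Finset.mul_sum]
          exact mul_le_mul_of_nonneg_left hsdiff1 hCnn
        have hb2 : |∑ k ∈ F n \ F', lam n k * u k| ≤ C * (1 - s n + ε n) := by
          refine (Finset.abs_sum_le_sum_abs _ _).trans ?_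
          have : ∀ k ∈ F n \ F', |lam n k * u k| ≤ C * lam n k := by
            intro k _
            rw [abs_mul, abs_of_nonneg ((hprob n).1 k), mul_comm]
            exact mul_le_mul_of_nonneg_right (huC k) ((hprob n).1 k)
          refine (Finset.sum_le_sum this).trans ?_
          rw [← Finset.mul_sum]
          exact mul_le_mul_of_nonneg_left hsdiff2 hCnn
        calc |∑ k ∈ F' \ F n, lam n k * u k - ∑ k ∈ F n \ F', lam n k * u k|
            ≤ |∑ k ∈ F' \ F n, lam n k * u k| + |∑ k ∈ F n \ F', lam n k * u k| :=
              abs_sub _ _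
          _ ≤ C * (1 - s n) + C * (1 - s n + ε n) := add_le_add hb1 hb2
          _ = C * ((1 - s n) + (1 - s n + ε n)) := by ring
      -- combine B, D
      have hBD : |∑ h ∈ F n, lam n h * u (g * h) - ∑ h ∈ F n, lam n h * u h|
          ≤ 2 * C * (ε n + δ n) := by
        have h1s : 1 - s n ≤ δ n := by
          have := hF n
          simp only [hs_def]
          linarith
        calc |∑ h ∈ F n, lam n h * u (g * h) - ∑ h ∈ F n, lam n h * u h|
            = |(∑ k ∈ F', lam n (g⁻¹ * k) * u k - ∑ k ∈ F', lam n k * u k)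
              + (∑ k ∈ F', lam n k * u k - ∑ h ∈ F n, lam n h * u h)| := by
              rw [hBmap]; ring_nf
          _ ≤ |∑ k ∈ F', lam n (g⁻¹ * k) * u k - ∑ k ∈ F', lam n k * u k|
              + |∑ k ∈ F', lam n k * u k - ∑ h ∈ F n, lam n h * u h| := abs_add_le _ _
          _ ≤ C * ε n + C * ((1 - s n) + (1 - s n + ε n)) := add_le_add h1 h2
          _ ≤ 2 * C * (ε n + δ n) := by nlinarith [hεnn n, hδpos n]
      -- express f values
      have hfq : f (q n) = (s n)⁻¹ * ∑ h ∈ F n, lam n h * u h := by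
        rw [hq_def]
        rw [map_sum, Finset.mul_sum]
        refine Finset.sum_congr rfl fun h _ => ?_
        rw [map_smul]
        simp only [smul_eq_mul, hu]
        ring
      have hfgq : f (act g (q n)) = (s n)⁻¹ * ∑ h ∈ F n, lam n h * u (g * h) := by
        have hact : act g (q n) = ∑ h ∈ F n, ((s n)⁻¹ * lam n h) • act g (act h x₀) := by
          rw [hq_def]
          exact act_sum' hconv (act g) (haffine g) (fun h => act h x₀) (F n)
            (fun h => (s n)⁻¹ * lam n h) (hwnn n) (hw1 n) (fun h _ => hmaps h hx₀)
        rw [hact, map_sum, Finset.mul_sum]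
        refine Finset.sum_congr rfl fun h hh => ?_
        rw [map_smul]
        simp only [smul_eq_mul, hu, ← hmul g h x₀ hx₀]
        ring
      rw [hfgq, hfq, ← mul_sub, abs_mul, abs_of_nonneg (inv_nonneg.2 (hs_pos n).le),
        ← Finset.sum_sub_distrib]
      rw [Finset.sum_sub_distrib]
      calc (s n)⁻¹ * |∑ h ∈ F n, lam n h * u (g * h) - ∑ h ∈ F n, lam n h * u h|
          ≤ 2 * (2 * C * (ε n + δ n)) := by
            apply mul_le_mul (hs_inv n) hBD (abs_nonneg _) (by norm_num)
        _ = 4 * C * (ε n + δ n) := by ring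
    -- tendsto
    have hbten : Tendsto (fun n => 4 * C * (ε n + δ n)) atTop (𝓝 0) := by
      have := ((hlim g).add hδten).const_mul (4 * C)
      simpa using this
    have hten : Tendsto (fun n => f (act g (q n)) - f (q n)) atTop (𝓝 0) := by
      refine tendsto_of_tendsto_of_tendsto_of_le_of_le (g := fun n => -(4 * C * (ε n + δ n)))
        (by simpa using hbten.neg) hbten ?_ ?_
      · intro n; exact (abs_le.1 (hA n)).1
      · intro n; exact (abs_le.1 (hA n)).2
    -- cluster point argument
    set ψ : E → ℝ := fun x => f (act g x) - f x with hψ_def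
    have hψc : ContinuousWithinAt ψ K p :=
      ((f.continuous.comp_continuousOn (hcont g)).sub f.continuous.continuousOn) p hpK
    have hle1 : 𝓝 p ⊓ map q atTop ≤ 𝓝[K] p := le_inf inf_le_left (inf_le_right.trans hmapK)
    have hm1 : map ψ (𝓝 p ⊓ map q atTop) ≤ 𝓝 (ψ p) := (map_mono hle1).trans hψc
    have hm2 : map ψ (𝓝 p ⊓ map q atTop) ≤ 𝓝 0 := by
      refine (map_mono inf_le_right).trans ?_
      rw [map_map]
      exact hten
    have hNB : NeBot (𝓝 (ψ p) ⊓ 𝓝 (0:ℝ)) := by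
      have : NeBot (𝓝 p ⊓ map q atTop) := hp
      exact neBot_of_le (le_inf hm1 hm2)
    have hψp : ψ p = 0 := eq_of_nhds_neBot hNB
    have : f (act g p) - f p = 0 := hψp
    linarith
  by_contra hne'
  obtain ⟨f, hf⟩ := SeparatingDual.exists_ne_zero (R := ℝ) (sub_ne_zero_of_ne hne')
  apply hf
  rw [map_sub, key f, sub_self]
end

section
/- A countable discrete group G satisfies Reiter's condition if and only if there exists a probability measure μ on G whose support generates G as a group and whose convolution powers are approximatively invariant, i.e. ‖gμ^{*n} − μ^{*n}‖ → 0 as n → ∞ for every g ∈ G. -/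
open Filter Topology
open scoped Classical

/-- Convolution of two measures on a discrete group: `(μ*ν)(g) = ∑_h μ(h) ν(h⁻¹g)`. -/
noncomputable def conv {G : Type*} [Group G] (μ ν : G → ℝ) : G → ℝ :=
  fun g => ∑' h, μ h * ν (h⁻¹ * g)

/-- Convolution powers of a measure, with `μ^{*0} = δ_e`. -/
noncomputable def convPow {G : Type*} [Group G] (μ : G → ℝ) : ℕ → G → ℝ
  | 0 => fun g => if g = 1 then 1 else 0
  | n + 1 => conv (convPow μ n) μ

open scoped ENNReal NNReal
set_option linter.unusedSectionVars false
set_option maxHeartbeats 2000000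

section Aux

variable {G : Type*} [Group G]

/-- translate -/
def tr (g : G) (f : G → ℝ) : G → ℝ := fun h => f (g⁻¹ * h)

/-- extended ℓ¹ norm -/
noncomputable def ei (f : G → ℝ) : ℝ≥0∞ := ∑' h, ENNReal.ofReal |f h|

namespace IsProbMeasure

variable {μ : G → ℝ}

theorem nonneg (h : IsProbMeasure μ) (g : G) : 0 ≤ μ g := h.1 g

theorem summable (h : IsProbMeasure μ) : Summable μ := h.2.summable

theorem tsum_eq (h : IsProbMeasure μ) : ∑' g, μ g = 1 := h.2.tsum_eq

theorem le_one (h : IsProbMeasure μ) (g : G) : μ g ≤ 1 :=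
  le_hasSum h.2 g fun j _ => h.1 j

theorem abs_eq (h : IsProbMeasure μ) (g : G) : |μ g| = μ g := abs_of_nonneg (h.1 g)

end IsProbMeasure

theorem ei_tr (g : G) (f : G → ℝ) : ei (tr g f) = ei f := by
  unfold ei tr
  exact Equiv.tsum_eq (Equiv.mulLeft g⁻¹) (fun h => ENNReal.ofReal |f h|)

theorem ei_ofReal {f : G → ℝ} (hs : Summable fun h => |f h|) :
    ei f = ENNReal.ofReal (∑' h, |f h|) := by
  rw [ENNReal.ofReal_tsum_of_nonneg (fun h => abs_nonneg _) hs]; rfl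

theorem ei_prob {μ : G → ℝ} (h : IsProbMeasure μ) : ei μ = 1 := by
  have : ei μ = ENNReal.ofReal (∑' g, μ g) := by
    rw [ENNReal.ofReal_tsum_of_nonneg h.1 h.summable]
    unfold ei; congr 1; ext g; rw [h.abs_eq]
  rw [this, h.tsum_eq, ENNReal.ofReal_one]

theorem ei_mono {f f' : G → ℝ} (h : ∀ g, |f g| ≤ |f' g|) : ei f ≤ ei f' :=
  ENNReal.tsum_le_tsum fun g => ENNReal.ofReal_le_ofReal (h g)

theorem ei_congr {f f' : G → ℝ} (h : ∀ g, f g = f' g) : ei f = ei f' := by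
  unfold ei; congr 1; ext g; rw [h]

theorem ei_add_le (f f' : G → ℝ) : ei (fun h => f h + f' h) ≤ ei f + ei f' := by
  calc ei (fun h => f h + f' h) ≤ ∑' h, (ENNReal.ofReal |f h| + ENNReal.ofReal |f' h|) := by
        refine ENNReal.tsum_le_tsum fun h => ?_
        rw [← ENNReal.ofReal_add (abs_nonneg _) (abs_nonneg _)]
        exact ENNReal.ofReal_le_ofReal (abs_add_le _ _)
    _ = ei f + ei f' := ENNReal.tsum_add

theorem ei_triangle (f f' f'' : G → ℝ) :
    ei (fun h => f h - f'' h) ≤ ei (fun h => f h - f' h) + ei (fun h => f' h - f'' h) := by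
  have := ei_add_le (G := G) (fun h => f h - f' h) (fun h => f' h - f'' h)
  simpa using this

theorem ei_smul (c : ℝ) (hc : 0 ≤ c) (f : G → ℝ) :
    ei (fun h => c * f h) = ENNReal.ofReal c * ei f := by
  unfold ei
  rw [← ENNReal.tsum_mul_left]
  congr 1; ext h
  rw [abs_mul, abs_of_nonneg hc, ENNReal.ofReal_mul hc]

theorem ei_neg (f : G → ℝ) : ei (fun h => -(f h)) = ei f := by
  unfold ei; congr 1; ext h; rw [abs_neg]

theorem ei_diff_le_two {μ ν : G → ℝ} (hμ : IsProbMeasure μ) (hν : IsProbMeasure ν) :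
    ei (fun h => μ h - ν h) ≤ 2 := by
  have h1 : ei (fun h => μ h - ν h) ≤ ei μ + ei (fun h => -(ν h)) := by
    refine le_trans (le_of_eq (ei_congr fun g => ?_)) (ei_add_le μ (fun h => -(ν h)))
    ring
  rw [ei_neg, ei_prob hμ, ei_prob hν] at h1
  refine le_trans h1 (le_of_eq ?_); norm_num

theorem ei_sum_le {ι : Type*} (s : Finset ι) (F : ι → G → ℝ) :
    ei (fun h => ∑ j ∈ s, F j h) ≤ ∑ j ∈ s, ei (F j) := by
  calc ei (fun h => ∑ j ∈ s, F j h) ≤ ∑' h, ∑ j ∈ s, ENNReal.ofReal |F j h| := by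
        refine ENNReal.tsum_le_tsum fun h => ?_
        refine le_trans (ENNReal.ofReal_le_ofReal (Finset.abs_sum_le_sum_abs _ _)) ?_
        rw [ENNReal.ofReal_sum_of_nonneg (fun j _ => abs_nonneg _)]
    _ = ∑ j ∈ s, ei (F j) := by
        rw [Summable.tsum_finsetSum (fun j _ => ENNReal.summable)]; rfl

end Aux
section Conv

variable {G : Type*} [Group G]

/-- Build a probability measure from nonnegativity and `ei = 1`. -/
theorem prob_of_ei {f : G → ℝ} (h0 : ∀ g, 0 ≤ f g)
    (h1 : (∑' g, ENNReal.ofReal (f g)) = 1) : IsProbMeasure f := by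
  set f' : G → ℝ≥0 := fun g => (f g).toNNReal with hf'
  have hcoe : ∀ g, (f' g : ℝ≥0∞) = ENNReal.ofReal (f g) := fun g => rfl
  have hne : (∑' g, (f' g : ℝ≥0∞)) ≠ ⊤ := by
    simp only [hcoe, h1]; exact ENNReal.one_ne_top
  have hs : Summable f' := ENNReal.tsum_coe_ne_top_iff_summable.1 hne
  have ht : ((∑' g, f' g : ℝ≥0) : ℝ≥0∞) = 1 := by
    rw [ENNReal.coe_tsum hs]; simp only [hcoe]; exact h1
  have ht1 : (∑' g, f' g : ℝ≥0) = 1 := by exact_mod_cast ht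
  have hhs : HasSum f' 1 := ht1 ▸ hs.hasSum
  have : HasSum (fun g => (f' g : ℝ)) ((1 : ℝ≥0) : ℝ) := NNReal.hasSum_coe.2 hhs
  refine ⟨h0, ?_⟩
  have hfe : (fun g => (f' g : ℝ)) = f := by
    funext g; exact Real.coe_toNNReal _ (h0 g)
  rw [hfe] at this; simpa using this

theorem prob_tr {μ : G → ℝ} (h : IsProbMeasure μ) (x : G) : IsProbMeasure (tr x μ) := by
  refine ⟨fun g => h.1 _, ?_⟩
  have := (Equiv.mulLeft x⁻¹).hasSum_iff (f := μ) (a := 1)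
  exact this.2 h.2

theorem tsum_ofReal_prob {μ : G → ℝ} (h : IsProbMeasure μ) :
    (∑' g, ENNReal.ofReal (μ g)) = 1 := by
  have := ei_prob h
  unfold ei at this
  rw [← this]; congr 1; ext g; rw [h.abs_eq]

theorem tsum_ofReal_tr {μ : G → ℝ} (h : IsProbMeasure μ) (x : G) :
    (∑' g, ENNReal.ofReal (μ (x⁻¹ * g))) = 1 :=
  tsum_ofReal_prob (prob_tr h x)

theorem summable_mul_right {f : G → ℝ} (hf : Summable f) (hf0 : ∀ g, 0 ≤ f g)
    {Z : G → ℝ} (hZ : IsProbMeasure Z) (w : G → G) :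
    Summable fun x => f x * Z (w x) :=
  Summable.of_nonneg_of_le (fun x => mul_nonneg (hf0 x) (hZ.1 _))
    (fun x => by
      have := hZ.le_one (w x)
      nlinarith [hf0 x, hZ.1 (w x)]) hf

theorem ofReal_conv {μ ν : G → ℝ} (hμ : IsProbMeasure μ) (hν : IsProbMeasure ν) (g : G) :
    ENNReal.ofReal (conv μ ν g)
      = ∑' h, ENNReal.ofReal (μ h) * ENNReal.ofReal (ν (h⁻¹ * g)) := by
  unfold conv
  rw [ENNReal.ofReal_tsum_of_nonneg (fun h => mul_nonneg (hμ.1 h) (hν.1 _))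
      (summable_mul_right hμ.summable hμ.1 hν _)]
  congr 1; ext h; rw [ENNReal.ofReal_mul (hμ.1 h)]

theorem conv_nonneg {μ ν : G → ℝ} (hμ : IsProbMeasure μ) (hν : IsProbMeasure ν) (g : G) :
    0 ≤ conv μ ν g :=
  tsum_nonneg fun h => mul_nonneg (hμ.1 h) (hν.1 _)

theorem conv_prob {μ ν : G → ℝ} (hμ : IsProbMeasure μ) (hν : IsProbMeasure ν) :
    IsProbMeasure (conv μ ν) := by
  refine prob_of_ei (conv_nonneg hμ hν) ?_
  calc (∑' g, ENNReal.ofReal (conv μ ν g))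
      = ∑' g, ∑' h, ENNReal.ofReal (μ h) * ENNReal.ofReal (ν (h⁻¹ * g)) := by
        congr 1; ext g; exact ofReal_conv hμ hν g
    _ = ∑' h, ∑' g, ENNReal.ofReal (μ h) * ENNReal.ofReal (ν (h⁻¹ * g)) :=
        ENNReal.tsum_comm
    _ = ∑' h, ENNReal.ofReal (μ h) * ∑' g, ENNReal.ofReal (ν (h⁻¹ * g)) := by
        congr 1; ext h; exact ENNReal.tsum_mul_left
    _ = ∑' h, ENNReal.ofReal (μ h) := by
        congr 1; ext h; rw [tsum_ofReal_tr hν h, mul_one]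
    _ = 1 := tsum_ofReal_prob hμ

theorem convPow_prob {μ : G → ℝ} (hμ : IsProbMeasure μ) (n : ℕ) :
    IsProbMeasure (convPow μ n) := by
  induction n with
  | zero =>
      refine ⟨fun g => by unfold convPow; positivity, ?_⟩
      exact hasSum_ite_eq 1 1
  | succ n ih => exact conv_prob ih hμ

theorem conv_assoc {a b c : G → ℝ} (ha : IsProbMeasure a) (hb : IsProbMeasure b)
    (hc : IsProbMeasure c) : conv (conv a b) c = conv a (conv b c) := by
  funext g
  have hab := conv_prob ha hb
  have hbc := conv_prob hb hc
  have h1 : ENNReal.ofReal (conv (conv a b) c g) = ENNReal.ofReal (conv a (conv b c) g) := by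
    rw [ofReal_conv hab hc, ofReal_conv ha hbc]
    calc (∑' u, ENNReal.ofReal (conv a b u) * ENNReal.ofReal (c (u⁻¹ * g)))
        = ∑' u, ∑' x, ENNReal.ofReal (a x) * ENNReal.ofReal (b (x⁻¹ * u))
            * ENNReal.ofReal (c (u⁻¹ * g)) := by
          congr 1; ext u
          rw [ofReal_conv ha hb, ← ENNReal.tsum_mul_right]
      _ = ∑' x, ∑' u, ENNReal.ofReal (a x) * (ENNReal.ofReal (b (x⁻¹ * u))
            * ENNReal.ofReal (c (u⁻¹ * g))) := by
          rw [ENNReal.tsum_comm]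
          congr 1; ext x; congr 1; ext u; ring
      _ = ∑' x, ENNReal.ofReal (a x) * ENNReal.ofReal (conv b c (x⁻¹ * g)) := by
          congr 1; ext x
          rw [ENNReal.tsum_mul_left]
          congr 1
          rw [ofReal_conv hb hc]
          have := Equiv.tsum_eq (Equiv.mulLeft x⁻¹)
            (fun u => ENNReal.ofReal (b u) * ENNReal.ofReal (c (u⁻¹ * (x⁻¹ * g))))
          simp only [Equiv.coe_mulLeft] at this
          rw [← this]
          congr 1; ext u
          congr 2
          group
  have := ENNReal.ofReal_eq_ofReal_iff (conv_nonneg hab hc g) (conv_nonneg ha hbc g)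
  exact this.1 h1

theorem conv_deltaL {μ : G → ℝ} (hμ : IsProbMeasure μ) :
    conv (convPow μ 0) μ = μ := by
  funext g
  show (∑' h, (if h = 1 then (1:ℝ) else 0) * μ (h⁻¹ * g)) = μ g
  have : ∀ h : G, (if h = 1 then (1:ℝ) else 0) * μ (h⁻¹ * g)
      = if h = 1 then μ g else 0 := by
    intro h
    by_cases hh : h = 1 <;> simp [hh]
  rw [tsum_congr this, tsum_ite_eq]

theorem conv_deltaR {μ : G → ℝ} (hμ : IsProbMeasure μ) :
    conv μ (convPow μ 0) = μ := by
  funext g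
  show (∑' h, μ h * (if h⁻¹ * g = 1 then (1:ℝ) else 0)) = μ g
  have : ∀ h : G, μ h * (if h⁻¹ * g = 1 then (1:ℝ) else 0)
      = if h = g then μ g else 0 := by
    intro h
    by_cases hh : h = g
    · subst hh; simp
    · have : h⁻¹ * g ≠ 1 := by
        intro hcon; exact hh (by rw [← inv_mul_eq_one]; exact hcon)
      simp [hh, this]
  rw [tsum_congr this, tsum_ite_eq]

theorem convPow_succ' {μ : G → ℝ} (hμ : IsProbMeasure μ) (n : ℕ) :
    convPow μ (n + 1) = conv μ (convPow μ n) := by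
  induction n with
  | zero =>
      show conv (convPow μ 0) μ = conv μ (convPow μ 0)
      rw [conv_deltaL hμ, conv_deltaR hμ]
  | succ n ih =>
      show conv (convPow μ (n+1)) μ = _
      rw [ih, conv_assoc hμ (convPow_prob hμ n) hμ, ← ih]
      rfl

end Conv
section Ineq

variable {G : Type*} [Group G]

theorem abs_tsum_le {ι : Type*} (f : ι → ℝ) (hs : Summable fun i => |f i|) :
    |∑' i, f i| ≤ ∑' i, |f i| := by
  simpa [Real.norm_eq_abs] using
    norm_tsum_le_tsum_norm (f := f) (by simpa [Real.norm_eq_abs] using hs)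

theorem prob_diff_abs_le_two {X Y : G → ℝ} (hX : IsProbMeasure X) (hY : IsProbMeasure Y)
    (g g' : G) : |X g - Y g'| ≤ 2 :=
  abs_sub_le_iff.2 ⟨by linarith [hX.le_one g, hY.1 g'], by linarith [hY.le_one g', hX.1 g]⟩

theorem tr_conv (g : G) (f ν : G → ℝ) : tr g (conv f ν) = conv (tr g f) ν := by
  funext h
  show conv f ν (g⁻¹ * h) = ∑' x, f (g⁻¹ * x) * ν (x⁻¹ * h)
  have := Equiv.tsum_eq (Equiv.mulLeft g) (fun x => f (g⁻¹ * x) * ν (x⁻¹ * h))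
  simp only [Equiv.coe_mulLeft] at this
  rw [← this]
  unfold conv
  congr 1; ext y
  congr 2
  · group
  · group

theorem summable_abs_sub {X Y : G → ℝ} (hX : IsProbMeasure X) (hY : IsProbMeasure Y) :
    Summable fun x => |X x - Y x| :=
  Summable.of_nonneg_of_le (fun x => abs_nonneg _)
    (fun x => by
      have := abs_sub_abs_le_abs_sub (X x) (Y x)
      rw [hX.abs_eq, hY.abs_eq] at *
      exact le_trans (abs_sub _ _) (by rw [hX.abs_eq, hY.abs_eq]))
    (hX.summable.add hY.summable)

theorem ei_conv_sub_conv {X Y Z : G → ℝ} (hX : IsProbMeasure X) (hY : IsProbMeasure Y)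
    (hZ : IsProbMeasure Z) :
    ei (fun h => conv X Z h - conv Y Z h) ≤ ei (fun h => X h - Y h) := by
  have habs := summable_abs_sub hX hY
  have hsum : ∀ h : G, Summable fun x => |X x - Y x| * Z (x⁻¹ * h) :=
    fun h => summable_mul_right habs (fun x => abs_nonneg _) hZ _
  have hpt : ∀ h : G, conv X Z h - conv Y Z h = ∑' x, (X x - Y x) * Z (x⁻¹ * h) := by
    intro h
    unfold conv
    rw [← Summable.tsum_sub (summable_mul_right hX.summable hX.1 hZ _)
        (summable_mul_right hY.summable hY.1 hZ _)]
    congr 1; ext x; ring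
  have hb : ∀ h : G, |conv X Z h - conv Y Z h| ≤ ∑' x, |X x - Y x| * Z (x⁻¹ * h) := by
    intro h
    have habs_eq : ∀ x : G, |(X x - Y x) * Z (x⁻¹ * h)| = |X x - Y x| * Z (x⁻¹ * h) :=
      fun x => by rw [abs_mul, hZ.abs_eq]
    rw [hpt h, ← tsum_congr habs_eq]
    exact abs_tsum_le _ ((hsum h).congr fun x => (habs_eq x).symm)
  calc ei (fun h => conv X Z h - conv Y Z h)
      ≤ ∑' h, ENNReal.ofReal (∑' x, |X x - Y x| * Z (x⁻¹ * h)) :=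
        ENNReal.tsum_le_tsum fun h => ENNReal.ofReal_le_ofReal (by
          exact le_trans (le_abs_self _) (by rw [abs_abs]; exact hb h))
    _ = ∑' h, ∑' x, ENNReal.ofReal (|X x - Y x| * Z (x⁻¹ * h)) := by
        congr 1; ext h
        exact ENNReal.ofReal_tsum_of_nonneg
          (fun x => mul_nonneg (abs_nonneg _) (hZ.1 _)) (hsum h)
    _ = ∑' x, ∑' h, ENNReal.ofReal (|X x - Y x| * Z (x⁻¹ * h)) := ENNReal.tsum_comm
    _ = ∑' x, ENNReal.ofReal |X x - Y x| * ∑' h, ENNReal.ofReal (Z (x⁻¹ * h)) := by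
        congr 1; ext x
        rw [← ENNReal.tsum_mul_left]
        congr 1; ext h
        rw [ENNReal.ofReal_mul (abs_nonneg _)]
    _ = ∑' x, ENNReal.ofReal |X x - Y x| := by
        congr 1; ext x; rw [tsum_ofReal_tr hZ x, mul_one]
    _ = ei (fun h => X h - Y h) := rfl

theorem ei_convL_sub_convL {ρ X Y : G → ℝ} (hρ : IsProbMeasure ρ) (hX : IsProbMeasure X)
    (hY : IsProbMeasure Y) :
    ei (fun h => conv ρ X h - conv ρ Y h) ≤ ei (fun h => X h - Y h) := by
  have hsum : ∀ h : G, Summable fun x => ρ x * |X (x⁻¹ * h) - Y (x⁻¹ * h)| := by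
    intro h
    refine Summable.of_nonneg_of_le (fun x => mul_nonneg (hρ.1 x) (abs_nonneg _))
      (fun x => ?_) (hρ.summable.mul_right 2)
    have h1 : |X (x⁻¹ * h) - Y (x⁻¹ * h)| ≤ 2 := prob_diff_abs_le_two hX hY _ _
    nlinarith [hρ.1 x]
  have hpt : ∀ h : G, conv ρ X h - conv ρ Y h = ∑' x, ρ x * (X (x⁻¹ * h) - Y (x⁻¹ * h)) := by
    intro h
    unfold conv
    rw [← Summable.tsum_sub (summable_mul_right hρ.summable hρ.1 hX _)
        (summable_mul_right hρ.summable hρ.1 hY _)]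
    congr 1; ext x; ring
  have hb : ∀ h : G, |conv ρ X h - conv ρ Y h| ≤ ∑' x, ρ x * |X (x⁻¹ * h) - Y (x⁻¹ * h)| := by
    intro h
    have habs_eq : ∀ x : G, |ρ x * (X (x⁻¹ * h) - Y (x⁻¹ * h))|
        = ρ x * |X (x⁻¹ * h) - Y (x⁻¹ * h)| :=
      fun x => by rw [abs_mul, hρ.abs_eq]
    rw [hpt h, ← tsum_congr habs_eq]
    exact abs_tsum_le _ ((hsum h).congr fun x => (habs_eq x).symm)
  calc ei (fun h => conv ρ X h - conv ρ Y h)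
      ≤ ∑' h, ENNReal.ofReal (∑' x, ρ x * |X (x⁻¹ * h) - Y (x⁻¹ * h)|) :=
        ENNReal.tsum_le_tsum fun h => ENNReal.ofReal_le_ofReal
          (le_trans (le_abs_self _) (by rw [abs_abs]; exact hb h))
    _ = ∑' h, ∑' x, ENNReal.ofReal (ρ x * |X (x⁻¹ * h) - Y (x⁻¹ * h)|) := by
        congr 1; ext h
        exact ENNReal.ofReal_tsum_of_nonneg
          (fun x => mul_nonneg (hρ.1 x) (abs_nonneg _)) (hsum h)
    _ = ∑' x, ∑' h, ENNReal.ofReal (ρ x * |X (x⁻¹ * h) - Y (x⁻¹ * h)|) := ENNReal.tsum_comm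
    _ = ∑' x, ENNReal.ofReal (ρ x) * ei (fun h => X (x⁻¹ * h) - Y (x⁻¹ * h)) := by
        congr 1; ext x
        unfold ei
        rw [← ENNReal.tsum_mul_left]
        congr 1; ext h
        rw [ENNReal.ofReal_mul (hρ.1 x)]
    _ = ∑' x, ENNReal.ofReal (ρ x) * ei (fun h => X h - Y h) := by
        congr 1; ext x
        congr 1
        exact ei_tr x (fun h => X h - Y h)
    _ = ei (fun h => X h - Y h) := by
        rw [ENNReal.tsum_mul_right, tsum_ofReal_prob hρ, one_mul]

theorem ei_conv_sub_self {ρ σ : G → ℝ} (hρ : IsProbMeasure ρ) (hσ : IsProbMeasure σ) :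
    ei (fun h => conv ρ σ h - σ h)
      ≤ ∑' x, ENNReal.ofReal (ρ x) * ei (fun h => σ (x⁻¹ * h) - σ h) := by
  have hsum : ∀ h : G, Summable fun x => ρ x * |σ (x⁻¹ * h) - σ h| := by
    intro h
    refine Summable.of_nonneg_of_le (fun x => mul_nonneg (hρ.1 x) (abs_nonneg _))
      (fun x => ?_) (hρ.summable.mul_right 2)
    have h1 : |σ (x⁻¹ * h) - σ h| ≤ 2 := prob_diff_abs_le_two hσ hσ _ _
    nlinarith [hρ.1 x]
  have hpt : ∀ h : G, conv ρ σ h - σ h = ∑' x, ρ x * (σ (x⁻¹ * h) - σ h) := by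
    intro h
    calc conv ρ σ h - σ h
        = (∑' x, ρ x * σ (x⁻¹ * h)) - ∑' x, ρ x * σ h := by
          rw [tsum_mul_right, hρ.tsum_eq, one_mul]; rfl
      _ = ∑' x, (ρ x * σ (x⁻¹ * h) - ρ x * σ h) :=
          (Summable.tsum_sub (summable_mul_right hρ.summable hρ.1 hσ _)
            (hρ.summable.mul_right (σ h))).symm
      _ = ∑' x, ρ x * (σ (x⁻¹ * h) - σ h) := by
          congr 1; ext x; ring
  have hb : ∀ h : G, |conv ρ σ h - σ h| ≤ ∑' x, ρ x * |σ (x⁻¹ * h) - σ h| := by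
    intro h
    have habs_eq : ∀ x : G, |ρ x * (σ (x⁻¹ * h) - σ h)| = ρ x * |σ (x⁻¹ * h) - σ h| :=
      fun x => by rw [abs_mul, hρ.abs_eq]
    rw [hpt h, ← tsum_congr habs_eq]
    exact abs_tsum_le _ ((hsum h).congr fun x => (habs_eq x).symm)
  calc ei (fun h => conv ρ σ h - σ h)
      ≤ ∑' h, ENNReal.ofReal (∑' x, ρ x * |σ (x⁻¹ * h) - σ h|) :=
        ENNReal.tsum_le_tsum fun h => ENNReal.ofReal_le_ofReal
          (le_trans (le_abs_self _) (by rw [abs_abs]; exact hb h))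
    _ = ∑' h, ∑' x, ENNReal.ofReal (ρ x * |σ (x⁻¹ * h) - σ h|) := by
        congr 1; ext h
        exact ENNReal.ofReal_tsum_of_nonneg
          (fun x => mul_nonneg (hρ.1 x) (abs_nonneg _)) (hsum h)
    _ = ∑' x, ∑' h, ENNReal.ofReal (ρ x * |σ (x⁻¹ * h) - σ h|) := ENNReal.tsum_comm
    _ = ∑' x, ENNReal.ofReal (ρ x) * ei (fun h => σ (x⁻¹ * h) - σ h) := by
        congr 1; ext x
        unfold ei
        rw [← ENNReal.tsum_mul_left]
        congr 1; ext h
        rw [ENNReal.ofReal_mul (hρ.1 x)]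

end Ineq
section Step

variable {G : Type*} [Group G]

theorem step_lemma (hR : ReiterCondition G) (F : Finset G) {ε : ℝ} (hε : 0 < ε) (x : G) :
    ∃ p : (G → ℝ) × Finset G, IsProbMeasure p.1 ∧ (∀ g ∉ p.2, p.1 g = 0) ∧ 0 < p.1 x ∧
      ∀ s ∈ F, ei (fun h => p.1 (s⁻¹ * h) - p.1 h) ≤ ENNReal.ofReal ε := by
  obtain ⟨lam, hprob, htend⟩ := hR
  set δ : ℝ := min (ε / 8) (1 / 2) with hδdef
  have hδpos : 0 < δ := lt_min (by linarith) (by norm_num)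
  have hδε : 5 * δ ≤ ε := by
    have := min_le_left (ε / 8) (1 / 2); simp only [← hδdef] at this; linarith
  have hδhalf : δ ≤ 1 / 2 := min_le_right _ _
  -- choose n
  have hev : ∀ᶠ n in atTop, ∀ s ∈ F, (∑' h, |lam n (s⁻¹ * h) - lam n h|) < δ := by
    rw [Filter.eventually_all_finset]
    intro s _
    exact (htend s).eventually_lt_const hδpos
  obtain ⟨n, hn⟩ := hev.exists
  set lamn := lam n with hlamn
  have hlamP : IsProbMeasure lamn := hprob n
  -- choose truncation
  have htr : ∀ᶠ T in (atTop : Filter (Finset G)), 1 - δ < ∑ h ∈ T, lamn h :=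
    hlamP.2.eventually (eventually_gt_nhds (by linarith))
  obtain ⟨T, hT⟩ := htr.exists
  set s0 : ℝ := ∑ h ∈ T, lamn h with hs0
  have hs0pos : 0 < s0 := by linarith
  have hs0le : s0 ≤ 1 := by
    rw [hs0, ← hlamP.tsum_eq]
    exact Summable.sum_le_tsum T (fun h _ => hlamP.1 h) hlamP.summable
  set c : ℝ := (1 - δ) / s0 with hc
  have hcnn : 0 ≤ c := div_nonneg (by linarith) hs0pos.le
  have hcle : c ≤ 1 := (div_le_one hs0pos).2 (by linarith)
  set κ : G → ℝ := fun h => if h ∈ T then lamn h else 0 with hκ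
  set d : G → ℝ := fun h => if h = x then (1:ℝ) else 0 with hd
  have hκnn : ∀ g, 0 ≤ κ g := fun g => by
    rw [hκ]; by_cases h : g ∈ T <;> simp [h, hlamP.1 g]
  have hκle : ∀ g, κ g ≤ lamn g := fun g => by
    rw [hκ]; by_cases h : g ∈ T <;> simp [h, hlamP.1 g]
  have hκsum : HasSum κ s0 := by
    have h1 : HasSum κ (∑ b ∈ T, κ b) :=
      hasSum_sum_of_ne_finset_zero (fun b hb => by rw [hκ]; simp [hb])
    have h2 : (∑ b ∈ T, κ b) = s0 := by
      rw [hs0]; refine Finset.sum_congr rfl fun b hb => ?_; rw [hκ]; simp [hb]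
    rwa [h2] at h1
  have hdprob : IsProbMeasure d :=
    ⟨fun g => by rw [hd]; by_cases h : g = x <;> simp [h], hasSum_ite_eq x 1⟩
  set ν : G → ℝ := fun h => c * κ h + δ * d h with hν
  have hνprob : IsProbMeasure ν := by
    refine ⟨fun g => add_nonneg (mul_nonneg hcnn (hκnn g))
      (mul_nonneg hδpos.le (hdprob.1 g)), ?_⟩
    have := (hκsum.mul_left c).add (hdprob.2.mul_left δ)
    have hval : c * s0 + δ * 1 = 1 := by
      rw [hc, div_mul_cancel₀ _ (ne_of_gt hs0pos)]; ring
    rwa [hval] at this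
  refine ⟨(ν, insert x T), hνprob, ?_, ?_, ?_⟩
  · intro g hg
    simp only [Finset.mem_insert, not_or] at hg
    rw [hν, hκ, hd]; simp [hg.1, hg.2]
  · show 0 < ν x
    have : ν x = c * κ x + δ * 1 := by rw [hν, hd]; simp
    rw [this]
    have := mul_nonneg hcnn (hκnn x)
    linarith
  · intro s hs
    have hlamS : Summable fun x => |lamn (s⁻¹ * x) - lamn x| :=
      summable_abs_sub (prob_tr hlamP s) hlamP
    -- bound on the delta part
    have hA : ei (fun h => d (s⁻¹ * h) - d h) ≤ 2 := ei_diff_le_two (prob_tr hdprob s) hdprob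
    -- bounds for the kappa part
    have c1 : ei (fun h => κ (s⁻¹ * h) - lamn (s⁻¹ * h)) = ei (fun h => lamn h - κ h) := by
      have e1 : ei (fun h => κ (s⁻¹ * h) - lamn (s⁻¹ * h)) = ei (fun h => κ h - lamn h) :=
        ei_tr s (fun h => κ h - lamn h)
      have e2 : ei (fun h => κ h - lamn h) = ei (fun h => -(lamn h - κ h)) :=
        ei_congr fun h => by ring
      rw [e1, e2, ei_neg]
    have c3 : ei (fun h => lamn h - κ h) ≤ ENNReal.ofReal δ := by
      have hsub : Summable fun h => |lamn h - κ h| := by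
        refine Summable.of_nonneg_of_le (fun h => abs_nonneg _) (fun h => ?_) hlamP.summable
        rw [abs_of_nonneg (by linarith [hκle h])]
        linarith [hκnn h]
      rw [ei_ofReal hsub]
      refine ENNReal.ofReal_le_ofReal ?_
      have : (∑' h, |lamn h - κ h|) = ∑' h, (lamn h - κ h) :=
        tsum_congr fun h => abs_of_nonneg (by linarith [hκle h])
      rw [this, Summable.tsum_sub hlamP.summable hκsum.summable, hlamP.tsum_eq, hκsum.tsum_eq]
      linarith
    have c4 : ei (fun h => lamn (s⁻¹ * h) - lamn h) ≤ ENNReal.ofReal δ := by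
      rw [ei_ofReal hlamS]
      exact ENNReal.ofReal_le_ofReal (le_of_lt (hn s hs))
    have hB : ei (fun h => κ (s⁻¹ * h) - κ h)
        ≤ ENNReal.ofReal δ + ENNReal.ofReal δ + ENNReal.ofReal δ := by
      calc ei (fun h => κ (s⁻¹ * h) - κ h)
          ≤ ei (fun h => κ (s⁻¹ * h) - lamn (s⁻¹ * h))
            + ei (fun h => lamn (s⁻¹ * h) - κ h) := ei_triangle _ _ _
        _ ≤ ei (fun h => κ (s⁻¹ * h) - lamn (s⁻¹ * h))
            + (ei (fun h => lamn (s⁻¹ * h) - lamn h) + ei (fun h => lamn h - κ h)) :=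
            add_le_add_right (ei_triangle _ _ _) _
        _ ≤ ENNReal.ofReal δ + (ENNReal.ofReal δ + ENNReal.ofReal δ) := by
            rw [c1]
            exact add_le_add c3 (add_le_add c4 c3)
        _ = ENNReal.ofReal δ + ENNReal.ofReal δ + ENNReal.ofReal δ := by ring
    calc ei (fun h => ν (s⁻¹ * h) - ν h)
        = ei (fun h => c * (κ (s⁻¹ * h) - κ h) + δ * (d (s⁻¹ * h) - d h)) :=
          ei_congr fun h => by simp only [hν]; ring
      _ ≤ ei (fun h => c * (κ (s⁻¹ * h) - κ h)) + ei (fun h => δ * (d (s⁻¹ * h) - d h)) :=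
          ei_add_le _ _
      _ = ENNReal.ofReal c * ei (fun h => κ (s⁻¹ * h) - κ h)
          + ENNReal.ofReal δ * ei (fun h => d (s⁻¹ * h) - d h) := by
          rw [ei_smul c hcnn, ei_smul δ hδpos.le]
      _ ≤ 1 * (ENNReal.ofReal δ + ENNReal.ofReal δ + ENNReal.ofReal δ)
          + ENNReal.ofReal δ * 2 := by
          refine add_le_add (mul_le_mul' (ENNReal.ofReal_le_one.2 hcle) hB)
            (mul_le_mul' le_rfl hA)
      _ = ENNReal.ofReal δ + ENNReal.ofReal δ + ENNReal.ofReal δ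
          + (ENNReal.ofReal δ + ENNReal.ofReal δ) := by rw [one_mul, mul_two]
      _ = ENNReal.ofReal (δ + δ + δ + (δ + δ)) := by
          rw [ENNReal.ofReal_add (by linarith) (by linarith),
            ENNReal.ofReal_add (by linarith) (by linarith),
            ENNReal.ofReal_add (by linarith) (by linarith)]
      _ ≤ ENNReal.ofReal ε := ENNReal.ofReal_le_ofReal (by linarith)

end Step
section Construct

variable {G : Type*} [Group G]

theorem exists_nu (hR : ReiterCondition G) (e : ℕ → G) :
    ∃ (ν : ℕ → G → ℝ) (A : ℕ → Finset G),
      (∀ k, IsProbMeasure (ν k)) ∧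
      (∀ k, ∀ g ∉ A k, ν k g = 0) ∧
      (∀ k, 0 < ν k (e k)) ∧
      (∀ k, A k ⊆ A (k+1)) ∧
      (∀ k, e k ∈ A k) ∧
      (∀ k, ∀ s ∈ A k, ei (fun h => ν (k+1) (s⁻¹ * h) - ν (k+1) h)
        ≤ ENNReal.ofReal ((8:ℝ)⁻¹ ^ (k+1))) := by
  have hstep : ∀ (F : Finset G) (k : ℕ), ∃ p : (G → ℝ) × Finset G,
      IsProbMeasure p.1 ∧ (∀ g ∉ p.2, p.1 g = 0) ∧ 0 < p.1 (e k) ∧ F ⊆ p.2 ∧ e k ∈ p.2 ∧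
      ∀ s ∈ F, ei (fun h => p.1 (s⁻¹ * h) - p.1 h) ≤ ENNReal.ofReal ((8:ℝ)⁻¹ ^ k) := by
    intro F k
    obtain ⟨p, h1, h2, h3, h4⟩ := step_lemma hR F (ε := (8:ℝ)⁻¹ ^ k) (by positivity) (e k)
    refine ⟨(p.1, (p.2 ∪ F) ∪ {e k}), h1, ?_, h3, ?_, ?_, h4⟩
    · intro g hg
      simp only [Finset.mem_union, not_or] at hg
      exact h2 g hg.1.1
    · intro g hg
      simp only [Finset.mem_union]
      exact Or.inl (Or.inr hg)
    · simp
  choose step hs1 hs2 hs3 hs4 hs5 hs6 using hstep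
  set seq : ℕ → (G → ℝ) × Finset G :=
    fun k => Nat.rec (step ∅ 0) (fun k ih => step ih.2 (k+1)) k with hseq
  refine ⟨fun k => (seq k).1, fun k => (seq k).2, ?_, ?_, ?_, ?_, ?_, ?_⟩
  · intro k; cases k with
    | zero => exact hs1 ∅ 0
    | succ k => exact hs1 (seq k).2 (k+1)
  · intro k; cases k with
    | zero => exact hs2 ∅ 0
    | succ k => exact hs2 (seq k).2 (k+1)
  · intro k; cases k with
    | zero => exact hs3 ∅ 0
    | succ k => exact hs3 (seq k).2 (k+1)
  · intro k; exact hs4 (seq k).2 (k+1)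
  · intro k; cases k with
    | zero => exact hs5 ∅ 0
    | succ k => exact hs5 (seq k).2 (k+1)
  · intro k s hsk
    exact hs6 (seq k).2 (k+1) s hsk

end Construct
section Helpers

variable {G : Type*} [Group G]

theorem tail_summable (m : ℕ) : Summable fun j : ℕ => ((2:ℝ)⁻¹ ^ (j + m + 1)) := by
  have h : Summable fun j : ℕ => ((2:ℝ)⁻¹ ^ j * 2⁻¹ ^ (m + 1)) :=
    (summable_geometric_of_lt_one (by norm_num) (by norm_num)).mul_right _
  refine h.congr fun j => ?_
  rw [← pow_add]; ring_nf

theorem tail_real (m : ℕ) : ∑' j : ℕ, ((2:ℝ)⁻¹ ^ (j + m + 1)) = 2⁻¹ ^ m := by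
  have h1 : ∀ j : ℕ, ((2:ℝ)⁻¹ ^ (j + m + 1)) = (2:ℝ)⁻¹ ^ j * 2⁻¹ ^ (m + 1) := by
    intro j; rw [← pow_add]; ring_nf
  rw [tsum_congr h1, tsum_mul_right, tsum_geometric_of_lt_one (by norm_num) (by norm_num)]
  have : ((1:ℝ) - 2⁻¹)⁻¹ = 2 := by norm_num
  rw [this, pow_succ]
  ring

theorem geom_tail (m : ℕ) :
    ∑' j : ℕ, ENNReal.ofReal ((2:ℝ)⁻¹ ^ (j + m + 1)) = ENNReal.ofReal ((2:ℝ)⁻¹ ^ m) := by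
  rw [← ENNReal.ofReal_tsum_of_nonneg (fun j => by positivity) (tail_summable m), tail_real]

theorem fin_geom (m : ℕ) : ∑ k ∈ Finset.range m, (2:ℝ)⁻¹ ^ (k + 1) = 1 - 2⁻¹ ^ m := by
  induction m with
  | zero => simp
  | succ m ih => rw [Finset.sum_range_succ, ih, pow_succ]; ring

theorem seriesBound {t : ℝ} (h0 : 0 < t) (h1 : t < 1) (n : ℕ) :
    ∑ j ∈ Finset.range n, (2 * (j:ℝ) + 1) * (1 - t) ^ j ≤ 3 / t ^ 2 := by
  set r : ℝ := 1 - t with hr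
  have hr0 : 0 ≤ r := by simp [hr]; linarith
  have hr1 : r < 1 := by simp [hr]; linarith
  have hrn : ‖r‖ < 1 := by rw [Real.norm_eq_abs, abs_of_nonneg hr0]; exact hr1
  have hs1 : Summable fun j : ℕ => r ^ j := summable_geometric_of_lt_one hr0 hr1
  have hs2 : Summable fun j : ℕ => (j:ℝ) * r ^ j := by
    have := summable_pow_mul_geometric_of_norm_lt_one 1 hrn (R := ℝ)
    exact this.congr fun j => by rw [pow_one]
  have b1 : ∑ j ∈ Finset.range n, r ^ j ≤ 1 / t := by
    refine le_trans (Summable.sum_le_tsum _ (fun j _ => by positivity) hs1) ?_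
    rw [tsum_geometric_of_lt_one hr0 hr1]
    rw [hr]; ring_nf; simp
  have b2 : ∑ j ∈ Finset.range n, (j:ℝ) * r ^ j ≤ 1 / t ^ 2 := by
    refine le_trans (Summable.sum_le_tsum _ (fun j _ => by positivity) hs2) ?_
    rw [tsum_coe_mul_geometric_of_norm_lt_one hrn]
    rw [hr]
    have h2 : (1 - (1 - t)) = t := by ring
    rw [h2, div_le_div_iff₀ (by positivity) (by positivity)]
    nlinarith
  have hsplit : ∑ j ∈ Finset.range n, (2 * (j:ℝ) + 1) * r ^ j
      = 2 * (∑ j ∈ Finset.range n, (j:ℝ) * r ^ j) + ∑ j ∈ Finset.range n, r ^ j := by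
    rw [Finset.mul_sum, ← Finset.sum_add_distrib]
    exact Finset.sum_congr rfl fun j _ => by ring
  rw [hsplit]
  have ht2 : 1 / t ≤ 1 / t ^ 2 := by
    rw [div_le_div_iff₀ (by positivity) (by positivity)]
    nlinarith
  have : (3:ℝ) / t ^ 2 = 2 * (1 / t ^ 2) + 1 / t ^ 2 := by ring
  rw [this]
  have := mul_le_mul_of_nonneg_left b2 (by norm_num : (0:ℝ) ≤ 2)
  linarith

theorem conv_mix {a b : ℝ} (ha : 0 ≤ a) (hb : 0 ≤ b) {μ ρ σ Z : G → ℝ}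
    (hρ : IsProbMeasure ρ) (hσ : IsProbMeasure σ) (hZ : IsProbMeasure Z)
    (hmix : ∀ x, μ x = a * ρ x + b * σ x) (h : G) :
    conv μ Z h = a * conv ρ Z h + b * conv σ Z h := by
  unfold conv
  have e1 : ∀ x : G, μ x * Z (x⁻¹ * h)
      = a * (ρ x * Z (x⁻¹ * h)) + b * (σ x * Z (x⁻¹ * h)) := by
    intro x; rw [hmix x]; ring
  rw [tsum_congr e1, Summable.tsum_add
    ((summable_mul_right hρ.summable hρ.1 hZ _).mul_left a)
    ((summable_mul_right hσ.summable hσ.1 hZ _).mul_left b),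
    tsum_mul_left, tsum_mul_left]

theorem conv_right_smul (ρ X : G → ℝ) (c : ℝ) (h : G) :
    conv ρ (fun y => c * X y) h = c * conv ρ X h := by
  unfold conv
  rw [← tsum_mul_left]
  exact tsum_congr fun x => by ring

theorem conv_right_add {ρ X Y : G → ℝ} (h : G)
    (hsX : Summable fun x => ρ x * X (x⁻¹ * h)) (hsY : Summable fun x => ρ x * Y (x⁻¹ * h)) :
    conv ρ (fun y => X y + Y y) h = conv ρ X h + conv ρ Y h := by
  unfold conv
  rw [← Summable.tsum_add hsX hsY]
  exact tsum_congr fun x => by ring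

theorem conv_right_sum {ρ : G → ℝ} {f : ℕ → G → ℝ} (n : ℕ) (h : G)
    (hs : ∀ j ∈ Finset.range n, Summable fun x => ρ x * f j (x⁻¹ * h)) :
    conv ρ (fun y => ∑ j ∈ Finset.range n, f j y) h
      = ∑ j ∈ Finset.range n, conv ρ (f j) h := by
  unfold conv
  have e1 : ∀ x : G, ρ x * ∑ j ∈ Finset.range n, f j (x⁻¹ * h)
      = ∑ j ∈ Finset.range n, ρ x * f j (x⁻¹ * h) := fun x => Finset.mul_sum _ _ _
  rw [tsum_congr e1, Summable.tsum_finsetSum hs]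

theorem ei_zero : ei (fun _ : G => (0:ℝ)) = 0 := by
  unfold ei; simp

/-- invariance of an infinite mixture -/
theorem ei_mix_tr {c : ℕ → ℝ} {w : ℕ → G → ℝ} (hc : ∀ j, 0 ≤ c j)
    (hw : ∀ j, IsProbMeasure (w j)) (hcs : Summable c) (x : G) {eps : ℕ → ℝ}
    (heps : ∀ j, 0 ≤ eps j)
    (hinv : ∀ j, ei (fun h => w j (x⁻¹ * h) - w j h) ≤ ENNReal.ofReal (eps j)) :
    ei (fun h => (∑' j, c j * w j (x⁻¹ * h)) - ∑' j, c j * w j h)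
      ≤ ∑' j, ENNReal.ofReal (c j) * ENNReal.ofReal (eps j) := by
  have hsum1 : ∀ y : G, Summable fun j => c j * w j y := fun y =>
    Summable.of_nonneg_of_le (fun j => mul_nonneg (hc j) ((hw j).1 y))
      (fun j => by nlinarith [(hw j).le_one y, (hw j).1 y, hc j]) hcs
  have hsumd : ∀ h : G, Summable fun j => c j * |w j (x⁻¹ * h) - w j h| := fun h =>
    Summable.of_nonneg_of_le (fun j => mul_nonneg (hc j) (abs_nonneg _))
      (fun j => by
        have := prob_diff_abs_le_two (hw j) (hw j) (x⁻¹ * h) h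
        nlinarith [hc j]) (hcs.mul_right 2)
  have hpt : ∀ h : G, (∑' j, c j * w j (x⁻¹ * h)) - ∑' j, c j * w j h
      = ∑' j, c j * (w j (x⁻¹ * h) - w j h) := by
    intro h
    rw [← Summable.tsum_sub (hsum1 (x⁻¹ * h)) (hsum1 h)]
    exact tsum_congr fun j => by ring
  have hb : ∀ h : G, |(∑' j, c j * w j (x⁻¹ * h)) - ∑' j, c j * w j h|
      ≤ ∑' j, c j * |w j (x⁻¹ * h) - w j h| := by
    intro h
    have habs_eq : ∀ j : ℕ, |c j * (w j (x⁻¹ * h) - w j h)| = c j * |w j (x⁻¹ * h) - w j h| :=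
      fun j => by rw [abs_mul, abs_of_nonneg (hc j)]
    rw [hpt h, ← tsum_congr habs_eq]
    exact abs_tsum_le _ ((hsumd h).congr fun j => (habs_eq j).symm)
  calc ei (fun h => (∑' j, c j * w j (x⁻¹ * h)) - ∑' j, c j * w j h)
      ≤ ∑' h, ENNReal.ofReal (∑' j, c j * |w j (x⁻¹ * h) - w j h|) :=
        ENNReal.tsum_le_tsum fun h => ENNReal.ofReal_le_ofReal
          (le_trans (le_abs_self _) (by rw [abs_abs]; exact hb h))
    _ = ∑' h, ∑' j, ENNReal.ofReal (c j * |w j (x⁻¹ * h) - w j h|) := by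
        congr 1; ext h
        exact ENNReal.ofReal_tsum_of_nonneg
          (fun j => mul_nonneg (hc j) (abs_nonneg _)) (hsumd h)
    _ = ∑' j, ∑' h, ENNReal.ofReal (c j * |w j (x⁻¹ * h) - w j h|) := ENNReal.tsum_comm
    _ = ∑' j, ENNReal.ofReal (c j) * ei (fun h => w j (x⁻¹ * h) - w j h) := by
        congr 1; ext j
        unfold ei
        rw [← ENNReal.tsum_mul_left]
        congr 1; ext h
        rw [ENNReal.ofReal_mul (hc j)]
    _ ≤ ∑' j, ENNReal.ofReal (c j) * ENNReal.ofReal (eps j) :=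
        ENNReal.tsum_le_tsum fun j => mul_le_mul' le_rfl (hinv j)

end Helpers
section KeyEst

section KeyEst
set_option maxHeartbeats 1000000 in
theorem key_est {G : Type*} [Group G] {μ ρ σ : G → ℝ} {t eb : ℝ} {AM : Finset G} {g : G}
    (hμprob : IsProbMeasure μ) (hρprob : IsProbMeasure ρ) (hσprob : IsProbMeasure σ)
    (ht0 : 0 < t) (ht1 : t < 1) (heb0 : 0 ≤ eb)
    (hmix : ∀ x, μ x = (1 - t) * ρ x + t * σ x)
    (hρsupp : ∀ x, x ∉ AM → ρ x = 0)
    (hσinv : ∀ x ∈ AM, ei (fun h => σ (x⁻¹ * h) - σ h) ≤ ENNReal.ofReal eb)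
    (hgA : g ∈ AM) (n : ℕ) :
    ei (fun h => convPow μ n (g⁻¹ * h) - convPow μ n h)
      ≤ ENNReal.ofReal (2 * (1-t)^n) + ENNReal.ofReal (3 * (eb / t)) := by
  -- iterated left convolutions
  set W : ℕ → G → ℝ := fun j => Nat.rec σ (fun _ ih => conv ρ ih) j with hWdef
  have hW0 : W 0 = σ := rfl
  have hWs : ∀ j, W (j+1) = conv ρ (W j) := fun j => rfl
  have hWprob : ∀ j, IsProbMeasure (W j) := by
    intro j; induction j with
    | zero => exact hσprob
    | succ j ih => exact conv_prob hρprob ih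
  have hBσ : ei (fun h => conv ρ σ h - σ h) ≤ ENNReal.ofReal eb := by
    refine le_trans (ei_conv_sub_self hρprob hσprob) ?_
    calc ∑' x, ENNReal.ofReal (ρ x) * ei (fun h => σ (x⁻¹ * h) - σ h)
        ≤ ∑' x, ENNReal.ofReal (ρ x) * ENNReal.ofReal eb := by
          refine ENNReal.tsum_le_tsum fun x => ?_
          by_cases hx : x ∈ AM
          · exact mul_le_mul' le_rfl (hσinv x hx)
          · rw [hρsupp x hx]; simp
      _ = ENNReal.ofReal eb := by
          rw [ENNReal.tsum_mul_right, tsum_ofReal_prob hρprob, one_mul]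
  have hWσ : ∀ j, ei (fun h => W j h - σ h) ≤ ENNReal.ofReal ((j:ℝ) * eb) := by
    intro j; induction j with
    | zero =>
        have h0 : (fun h => W 0 h - σ h) = fun _ : G => (0:ℝ) :=
          funext fun h => by rw [hW0]; ring
        rw [h0, ei_zero]; exact zero_le
    | succ j ih =>
        calc ei (fun h => W (j+1) h - σ h)
            ≤ ei (fun h => conv ρ (W j) h - conv ρ σ h) + ei (fun h => conv ρ σ h - σ h) :=
              ei_triangle _ _ _
          _ ≤ ei (fun h => W j h - σ h) + ENNReal.ofReal eb :=
              add_le_add (ei_convL_sub_convL hρprob (hWprob j) hσprob) hBσ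
          _ ≤ ENNReal.ofReal ((j:ℝ) * eb) + ENNReal.ofReal eb := add_le_add ih le_rfl
          _ = ENNReal.ofReal (((j:ℕ)+1:ℝ) * eb) := by
              rw [← ENNReal.ofReal_add (by positivity) heb0]
              congr 1; ring
          _ = ENNReal.ofReal ((((j+1):ℕ):ℝ) * eb) := by push_cast; ring_nf
  -- the decomposition identity
  have hI : ∀ n : ℕ, convPow μ n = fun h =>
      (1-t)^n * convPow ρ n h
        + t * ∑ j ∈ Finset.range n, (1-t)^j * conv (W j) (convPow μ (n-1-j)) h := by
    intro n; induction n with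
    | zero =>
        funext h
        simp [convPow]
    | succ n ih =>
        funext h
        have hZn := convPow_prob hμprob n
        have hRn := convPow_prob hρprob n
        have hCprob : ∀ j, IsProbMeasure (conv (W j) (convPow μ (n-1-j))) :=
          fun j => conv_prob (hWprob j) (convPow_prob hμprob _)
        have hSnn : ∀ y, 0 ≤ ∑ j ∈ Finset.range n,
            (1-t)^j * conv (W j) (convPow μ (n-1-j)) y := by
          intro y
          exact Finset.sum_nonneg fun j _ =>
            mul_nonneg (pow_nonneg (by linarith) j) ((hCprob j).1 y)
        have hSle : ∀ y, (∑ j ∈ Finset.range n,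
            (1-t)^j * conv (W j) (convPow μ (n-1-j)) y) ≤ n := by
          intro y
          calc (∑ j ∈ Finset.range n, (1-t)^j * conv (W j) (convPow μ (n-1-j)) y)
              ≤ ∑ j ∈ Finset.range n, 1 := by
                refine Finset.sum_le_sum fun j _ => ?_
                have h1 : (1-t)^j ≤ 1 :=
                  pow_le_one₀ (by linarith) (by linarith)
                have h2 := (hCprob j).le_one y
                have h3 := (hCprob j).1 y
                nlinarith
            _ = n := by simp
        have hs1 : Summable fun x => ρ x * ((1-t)^n * convPow ρ n (x⁻¹ * h)) := by
          refine ((summable_mul_right hρprob.summable hρprob.1 hRn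
            (fun x => x⁻¹ * h)).mul_left ((1-t)^n)).congr fun x => by ring
        have hs2 : Summable fun x => ρ x * (t * ∑ j ∈ Finset.range n,
            (1-t)^j * conv (W j) (convPow μ (n-1-j)) (x⁻¹ * h)) := by
          refine Summable.of_nonneg_of_le
            (fun x => mul_nonneg (hρprob.1 x) (mul_nonneg ht0.le (hSnn _)))
            (fun x => ?_) (hρprob.summable.mul_right (t * n))
          exact mul_le_mul_of_nonneg_left
            (mul_le_mul_of_nonneg_left (hSle _) ht0.le) (hρprob.1 x)
        have hsum_each : ∀ j ∈ Finset.range n, Summable fun x =>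
            ρ x * ((1-t)^j * conv (W j) (convPow μ (n-1-j)) (x⁻¹ * h)) := by
          intro j _
          refine ((summable_mul_right hρprob.summable hρprob.1 (hCprob j)
            (fun x => x⁻¹ * h)).mul_left ((1-t)^j)).congr fun x => by ring
        have estep : conv ρ (convPow μ n) h
            = (1-t)^n * convPow ρ (n+1) h
              + t * ∑ j ∈ Finset.range n, (1-t)^j * conv (W (j+1)) (convPow μ (n-1-j)) h := by
          calc conv ρ (convPow μ n) h
              = conv ρ (fun y => (1-t)^n * convPow ρ n y + t * ∑ j ∈ Finset.range n,
                  (1-t)^j * conv (W j) (convPow μ (n-1-j)) y) h := by rw [ih]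
            _ = conv ρ (fun y => (1-t)^n * convPow ρ n y) h
                + conv ρ (fun y => t * ∑ j ∈ Finset.range n,
                  (1-t)^j * conv (W j) (convPow μ (n-1-j)) y) h :=
                conv_right_add h hs1 hs2
            _ = (1-t)^n * conv ρ (convPow ρ n) h
                + t * conv ρ (fun y => ∑ j ∈ Finset.range n,
                  (1-t)^j * conv (W j) (convPow μ (n-1-j)) y) h := by
                rw [conv_right_smul ρ (convPow ρ n) ((1-t)^n) h,
                  conv_right_smul ρ (fun y => ∑ j ∈ Finset.range n,
                    (1-t)^j * conv (W j) (convPow μ (n-1-j)) y) t h]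
            _ = (1-t)^n * convPow ρ (n+1) h
                + t * ∑ j ∈ Finset.range n,
                  conv ρ (fun y => (1-t)^j * conv (W j) (convPow μ (n-1-j)) y) h := by
                rw [show conv ρ (convPow ρ n) h = convPow ρ (n+1) h from
                    (congrFun (convPow_succ' hρprob n) h).symm,
                  conv_right_sum (ρ := ρ)
                    (f := fun j y => (1-t)^j * conv (W j) (convPow μ (n-1-j)) y) n h hsum_each]
            _ = (1-t)^n * convPow ρ (n+1) h
                + t * ∑ j ∈ Finset.range n, (1-t)^j * conv (W (j+1)) (convPow μ (n-1-j)) h := by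
                congr 1
                congr 1
                refine Finset.sum_congr rfl fun j _ => ?_
                rw [conv_right_smul ρ (conv (W j) (convPow μ (n-1-j))) ((1-t)^j) h]
                congr 1
                rw [← conv_assoc hρprob (hWprob j) (convPow_prob hμprob _), ← hWs j]
        calc convPow μ (n+1) h = conv μ (convPow μ n) h :=
              congrFun (convPow_succ' hμprob n) h
          _ = (1-t) * conv ρ (convPow μ n) h + t * conv σ (convPow μ n) h :=
              conv_mix (by linarith) ht0.le hρprob hσprob hZn hmix h
          _ = (1-t) * ((1-t)^n * convPow ρ (n+1) h
                + t * ∑ j ∈ Finset.range n, (1-t)^j * conv (W (j+1)) (convPow μ (n-1-j)) h)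
              + t * conv σ (convPow μ n) h := by rw [estep]
          _ = (1-t)^(n+1) * convPow ρ (n+1) h
              + t * ∑ j ∈ Finset.range (n+1), (1-t)^j * conv (W j) (convPow μ (n+1-1-j)) h := by
              rw [Finset.sum_range_succ']
              have hidx : ∀ j, n + 1 - 1 - (j+1) = n - 1 - j := fun j => by omega
              have h00 : (1-t)^0 * conv (W 0) (convPow μ (n+1-1-0)) h
                  = conv σ (convPow μ n) h := by
                rw [pow_zero, one_mul, hW0]
                norm_num
              rw [h00]
              have hterm : ∀ j ∈ Finset.range n,
                  (1-t)^(j+1) * conv (W (j+1)) (convPow μ (n+1-1-(j+1))) h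
                    = (1-t) * ((1-t)^j * conv (W (j+1)) (convPow μ (n-1-j)) h) := by
                intro j _
                rw [hidx j]; ring
              rw [Finset.sum_congr rfl hterm, ← Finset.mul_sum]
              ring
  -- final estimate for this M and n
  have hCjprob : ∀ j, IsProbMeasure (conv (W j) (convPow μ (n-1-j))) :=
    fun j => conv_prob (hWprob j) (convPow_prob hμprob _)
  have hDeq : (fun h => convPow μ n (g⁻¹ * h) - convPow μ n h)
      = fun h => (1-t)^n * (convPow ρ n (g⁻¹*h) - convPow ρ n h)
          + t * ∑ j ∈ Finset.range n,
            (1-t)^j * (conv (W j) (convPow μ (n-1-j)) (g⁻¹*h)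
              - conv (W j) (convPow μ (n-1-j)) h) := by
    funext h
    rw [congrFun (hI n) (g⁻¹ * h), congrFun (hI n) h]
    have hsplit : ∑ j ∈ Finset.range n,
        (1-t)^j * (conv (W j) (convPow μ (n-1-j)) (g⁻¹*h)
          - conv (W j) (convPow μ (n-1-j)) h)
        = (∑ j ∈ Finset.range n, (1-t)^j * conv (W j) (convPow μ (n-1-j)) (g⁻¹*h))
          - ∑ j ∈ Finset.range n, (1-t)^j * conv (W j) (convPow μ (n-1-j)) h := by
      rw [← Finset.sum_sub_distrib]
      exact Finset.sum_congr rfl fun j _ => by ring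
    rw [hsplit]; ring
  have hFj : ∀ j, ei (fun h => conv (W j) (convPow μ (n-1-j)) (g⁻¹ * h)
      - conv (W j) (convPow μ (n-1-j)) h) ≤ ENNReal.ofReal ((2*(j:ℝ)+1) * eb) := by
    intro j
    have htreq : (fun h => conv (W j) (convPow μ (n-1-j)) (g⁻¹ * h)
        - conv (W j) (convPow μ (n-1-j)) h)
        = fun h => conv (tr g (W j)) (convPow μ (n-1-j)) h
          - conv (W j) (convPow μ (n-1-j)) h := by
      funext h
      congr 1
      exact congrFun (tr_conv g (W j) (convPow μ (n-1-j))) h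
    rw [htreq]
    have hb3 : ei (fun h => σ h - W j h) = ei (fun h => W j h - σ h) := by
      have h1 : ei (fun h => σ h - W j h) = ei (fun h => -(W j h - σ h)) :=
        ei_congr fun h => by ring
      rw [h1, ei_neg]
    calc ei (fun h => conv (tr g (W j)) (convPow μ (n-1-j)) h
        - conv (W j) (convPow μ (n-1-j)) h)
        ≤ ei (fun h => tr g (W j) h - W j h) :=
          ei_conv_sub_conv (prob_tr (hWprob j) g) (hWprob j) (convPow_prob hμprob _)
      _ ≤ ei (fun h => tr g (W j) h - tr g σ h) + ei (fun h => tr g σ h - W j h) :=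
          ei_triangle _ _ _
      _ ≤ ei (fun h => tr g (W j) h - tr g σ h)
          + (ei (fun h => tr g σ h - σ h) + ei (fun h => σ h - W j h)) :=
          add_le_add le_rfl (ei_triangle _ _ _)
      _ = ei (fun h => W j h - σ h)
          + (ei (fun h => σ (g⁻¹ * h) - σ h) + ei (fun h => W j h - σ h)) := by
          rw [hb3]
          congr 1
          exact ei_tr g (fun h => W j h - σ h)
      _ ≤ ENNReal.ofReal ((j:ℝ) * eb)
          + (ENNReal.ofReal eb + ENNReal.ofReal ((j:ℝ) * eb)) :=
          add_le_add (hWσ j) (add_le_add (hσinv g hgA) (hWσ j))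
      _ = ENNReal.ofReal ((2*(j:ℝ)+1) * eb) := by
          rw [← ENNReal.ofReal_add heb0 (by positivity),
            ← ENNReal.ofReal_add (by positivity) (by positivity)]
          congr 1; ring
  rw [hDeq]
  have h1tn : (0:ℝ) ≤ (1-t)^n := pow_nonneg (by linarith) n
  have h1tj : ∀ j : ℕ, (0:ℝ) ≤ (1-t)^j := fun j => pow_nonneg (by linarith) j
  have hB1 : ei (fun h => (1-t)^n * (convPow ρ n (g⁻¹*h) - convPow ρ n h))
      ≤ ENNReal.ofReal (2 * (1-t)^n) := by
    rw [ei_smul _ h1tn]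
    calc ENNReal.ofReal ((1-t)^n)
          * ei (fun h => convPow ρ n (g⁻¹*h) - convPow ρ n h)
        ≤ ENNReal.ofReal ((1-t)^n) * 2 := mul_le_mul' le_rfl
          (ei_diff_le_two (prob_tr (convPow_prob hρprob n) g) (convPow_prob hρprob n))
      _ = ENNReal.ofReal (2 * (1-t)^n) := by
          rw [ENNReal.ofReal_mul (by norm_num : (0:ℝ) ≤ 2), ENNReal.ofReal_ofNat,
            mul_comm]
  have hB2 : ei (fun h => t * ∑ j ∈ Finset.range n,
      (1-t)^j * (conv (W j) (convPow μ (n-1-j)) (g⁻¹*h)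
        - conv (W j) (convPow μ (n-1-j)) h))
      ≤ ENNReal.ofReal (3 * (eb / t)) := by
    rw [ei_smul _ ht0.le]
    have hstep1 : ei (fun h => ∑ j ∈ Finset.range n,
        (1-t)^j * (conv (W j) (convPow μ (n-1-j)) (g⁻¹*h)
          - conv (W j) (convPow μ (n-1-j)) h))
        ≤ ∑ j ∈ Finset.range n, ENNReal.ofReal ((1-t)^j * ((2*(j:ℝ)+1) * eb)) := by
      refine le_trans (ei_sum_le _ _) ?_
      refine Finset.sum_le_sum fun j _ => ?_
      rw [ei_smul _ (h1tj j), ENNReal.ofReal_mul (h1tj j)]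
      exact mul_le_mul' le_rfl (hFj j)
    refine le_trans (mul_le_mul' le_rfl hstep1) ?_
    rw [← ENNReal.ofReal_sum_of_nonneg (fun j _ => mul_nonneg (h1tj j)
        (mul_nonneg (by positivity) heb0)),
      ← ENNReal.ofReal_mul ht0.le]
    refine ENNReal.ofReal_le_ofReal ?_
    have h1 : ∑ j ∈ Finset.range n, (1-t)^j * ((2*(j:ℝ)+1) * eb)
        = eb * ∑ j ∈ Finset.range n, (2*(j:ℝ)+1) * (1-t)^j := by
      rw [Finset.mul_sum]
      exact Finset.sum_congr rfl fun j _ => by ring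
    rw [h1]
    have h2 := seriesBound ht0 ht1 n
    calc t * (eb * ∑ j ∈ Finset.range n, (2*(j:ℝ)+1) * (1-t)^j)
        ≤ t * (eb * (3 / t^2)) :=
          mul_le_mul_of_nonneg_left (mul_le_mul_of_nonneg_left h2 heb0) ht0.le
      _ = 3 * (eb / t) := by field_simp
  exact le_trans (ei_add_le _ _) (add_le_add hB1 hB2)

end KeyEst

end KeyEst
section Forward

theorem reiter_forward {G : Type*} [Group G] [Countable G] (hR : ReiterCondition G) :
    ∃ μ : G → ℝ, IsProbMeasure μ ∧ Subgroup.closure {g : G | 0 < μ g} = ⊤ ∧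
      ∀ g : G, Tendsto (fun n => ∑' h, |convPow μ n (g⁻¹ * h) - convPow μ n h|) atTop (𝓝 0) := by
  obtain ⟨e, he⟩ := exists_surjective_nat G
  obtain ⟨ν, A, hprob, hsupp, hpos, hAstep, heA, hinv⟩ := exists_nu hR e
  have hAmono : ∀ {j k : ℕ}, j ≤ k → A j ⊆ A k := by
    intro j k hjk
    exact monotone_nat_of_le_succ (f := A) (fun n => Finset.le_iff_subset.2 (hAstep n)) hjk
  set μ : G → ℝ := fun g => ∑' k, (2:ℝ)⁻¹ ^ (k+1) * ν k g with hμdef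
  have hterm_nn : ∀ (k : ℕ) (g : G), 0 ≤ (2:ℝ)⁻¹ ^ (k+1) * ν k g :=
    fun k g => mul_nonneg (by positivity) ((hprob k).1 g)
  have hSg : ∀ g, Summable fun k => (2:ℝ)⁻¹ ^ (k+1) * ν k g := by
    intro g
    refine Summable.of_nonneg_of_le (fun k => hterm_nn k g) (fun k => ?_)
      ((tail_summable 0).congr fun j => by rw [Nat.add_zero])
    have h1 := (hprob k).le_one g
    have h2 := (hprob k).1 g
    have h3 : (0:ℝ) ≤ (2:ℝ)⁻¹ ^ (k+1) := by positivity
    nlinarith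
  have hμnn : ∀ g, 0 ≤ μ g := fun g => tsum_nonneg fun k => hterm_nn k g
  have hμofReal : ∑' g, ENNReal.ofReal (μ g) = 1 := by
    calc ∑' g, ENNReal.ofReal (μ g)
        = ∑' (g : G), ∑' (k : ℕ), ENNReal.ofReal ((2:ℝ)⁻¹ ^ (k+1) * ν k g) := by
          congr 1; ext g
          exact ENNReal.ofReal_tsum_of_nonneg (fun k => hterm_nn k g) (hSg g)
      _ = ∑' (k : ℕ), ∑' (g : G), ENNReal.ofReal ((2:ℝ)⁻¹ ^ (k+1) * ν k g) :=
          ENNReal.tsum_comm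
      _ = ∑' (k : ℕ), ENNReal.ofReal ((2:ℝ)⁻¹ ^ (k+1)) := by
          congr 1; ext k
          calc ∑' (g : G), ENNReal.ofReal ((2:ℝ)⁻¹ ^ (k+1) * ν k g)
              = ∑' (g : G), ENNReal.ofReal ((2:ℝ)⁻¹ ^ (k+1)) * ENNReal.ofReal (ν k g) := by
                congr 1; ext g; rw [ENNReal.ofReal_mul (by positivity)]
            _ = ENNReal.ofReal ((2:ℝ)⁻¹ ^ (k+1)) := by
                rw [ENNReal.tsum_mul_left, tsum_ofReal_prob (hprob k), mul_one]
      _ = 1 := by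
          have h := geom_tail 0
          simp only [Nat.add_zero] at h
          rw [h, pow_zero, ENNReal.ofReal_one]
  have hμprob : IsProbMeasure μ := prob_of_ei hμnn hμofReal
  have hμpos : ∀ g, 0 < μ g := by
    intro g
    obtain ⟨i, rfl⟩ := he g
    have h1 : (2:ℝ)⁻¹ ^ (i+1) * ν i (e i) ≤ μ (e i) :=
      Summable.le_tsum (hSg (e i)) i fun j _ => hterm_nn j (e i)
    have h2 : 0 < (2:ℝ)⁻¹ ^ (i+1) * ν i (e i) := by
      have := hpos i; positivity
    linarith
  refine ⟨μ, hμprob, ?_, ?_⟩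
  · have : {g : G | 0 < μ g} = Set.univ := Set.eq_univ_of_forall hμpos
    rw [this, Subgroup.closure_univ]
  intro g
  obtain ⟨i, hi⟩ := he g
  have key : ∀ M : ℕ, i ≤ M → ∀ n : ℕ,
      ei (fun h => convPow μ n (g⁻¹ * h) - convPow μ n h)
        ≤ ENNReal.ofReal (2 * (1 - (2:ℝ)⁻¹ ^ (M+1)) ^ n)
          + ENNReal.ofReal (3 * (4:ℝ)⁻¹ ^ (M+1)) := by
    intro M hiM n
    set t : ℝ := (2:ℝ)⁻¹ ^ (M+1) with ht
    have ht0 : 0 < t := by positivity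
    have ht12 : t ≤ 2⁻¹ := by
      rw [ht]
      calc (2:ℝ)⁻¹ ^ (M+1) ≤ 2⁻¹ ^ 1 :=
        pow_le_pow_of_le_one (by norm_num) (by norm_num) (by omega)
      _ = 2⁻¹ := pow_one _
    have ht1 : t < 1 := lt_of_le_of_lt ht12 (by norm_num)
    have h1t0 : (0:ℝ) < 1 - t := by linarith
    have hgAM : g ∈ A M := by rw [← hi]; exact hAmono hiM (heA i)
    set eb : ℝ := (8:ℝ)⁻¹ ^ (M+1) with heb
    have heb0 : 0 ≤ eb := by positivity
    -- the two pieces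
    set ρ : G → ℝ := fun y => (1 - t)⁻¹ * ∑ k ∈ Finset.range (M+1), (2:ℝ)⁻¹ ^ (k+1) * ν k y
      with hρdef
    set σ : G → ℝ := fun y => t⁻¹ * ∑' j : ℕ, (2:ℝ)⁻¹ ^ (j+(M+1)+1) * ν (j+(M+1)) y with hσdef
    have hρprob : IsProbMeasure ρ := by
      constructor
      · intro y
        exact mul_nonneg (by positivity)
          (Finset.sum_nonneg fun k _ => hterm_nn k y)
      · have h1 : HasSum (fun y => ∑ k ∈ Finset.range (M+1), (2:ℝ)⁻¹ ^ (k+1) * ν k y)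
            (∑ k ∈ Finset.range (M+1), (2:ℝ)⁻¹ ^ (k+1) * 1) :=
          hasSum_sum fun k _ => (hprob k).2.mul_left _
        have h2 := h1.mul_left (1 - t)⁻¹
        have h3 : (1 - t)⁻¹ * ∑ k ∈ Finset.range (M+1), (2:ℝ)⁻¹ ^ (k+1) * 1 = 1 := by
          simp only [mul_one]
          rw [fin_geom (M+1), ← ht]
          exact inv_mul_cancel₀ (by linarith)
        rwa [h3] at h2
    have hσsum_y : ∀ y, Summable fun j : ℕ => (2:ℝ)⁻¹ ^ (j+(M+1)+1) * ν (j+(M+1)) y := by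
      intro y
      refine Summable.of_nonneg_of_le (fun j => hterm_nn _ y) (fun j => ?_) (tail_summable (M+1))
      have h1 := (hprob (j+(M+1))).le_one y
      have h2 := (hprob (j+(M+1))).1 y
      have h3 : (0:ℝ) ≤ (2:ℝ)⁻¹ ^ (j+(M+1)+1) := by positivity
      nlinarith
    have hσnn : ∀ y, 0 ≤ σ y :=
      fun y => mul_nonneg (by positivity) (tsum_nonneg fun j => hterm_nn _ y)
    have hσprob : IsProbMeasure σ := by
      refine prob_of_ei hσnn ?_
      calc ∑' y, ENNReal.ofReal (σ y)
          = ∑' y, ENNReal.ofReal t⁻¹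
              * ∑' j : ℕ, ENNReal.ofReal ((2:ℝ)⁻¹ ^ (j+(M+1)+1) * ν (j+(M+1)) y) := by
            congr 1; ext y
            rw [hσdef]
            rw [ENNReal.ofReal_mul (by positivity)]
            congr 1
            exact ENNReal.ofReal_tsum_of_nonneg (fun j => hterm_nn _ y) (hσsum_y y)
        _ = ENNReal.ofReal t⁻¹
            * ∑' y, ∑' j : ℕ, ENNReal.ofReal ((2:ℝ)⁻¹ ^ (j+(M+1)+1) * ν (j+(M+1)) y) :=
            ENNReal.tsum_mul_left
        _ = ENNReal.ofReal t⁻¹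
            * ∑' j : ℕ, ∑' y, ENNReal.ofReal ((2:ℝ)⁻¹ ^ (j+(M+1)+1) * ν (j+(M+1)) y) := by
            rw [ENNReal.tsum_comm]
        _ = ENNReal.ofReal t⁻¹ * ∑' j : ℕ, ENNReal.ofReal ((2:ℝ)⁻¹ ^ (j+(M+1)+1)) := by
            congr 1; congr 1; ext j
            calc ∑' y, ENNReal.ofReal ((2:ℝ)⁻¹ ^ (j+(M+1)+1) * ν (j+(M+1)) y)
                = ∑' y, ENNReal.ofReal ((2:ℝ)⁻¹ ^ (j+(M+1)+1))
                    * ENNReal.ofReal (ν (j+(M+1)) y) := by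
                  congr 1; ext y; rw [ENNReal.ofReal_mul (by positivity)]
              _ = ENNReal.ofReal ((2:ℝ)⁻¹ ^ (j+(M+1)+1)) := by
                  rw [ENNReal.tsum_mul_left, tsum_ofReal_prob (hprob _), mul_one]
        _ = ENNReal.ofReal t⁻¹ * ENNReal.ofReal t := by rw [geom_tail (M+1), ← ht]
        _ = 1 := by
            rw [← ENNReal.ofReal_mul (by positivity), inv_mul_cancel₀ (ne_of_gt ht0),
              ENNReal.ofReal_one]
    have hmix : ∀ x, μ x = (1 - t) * ρ x + t * σ x := by
      intro x
      have h1 := Summable.sum_add_tsum_nat_add (f := fun k => (2:ℝ)⁻¹ ^ (k+1) * ν k x) (M+1) (hSg x)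
      have h2 : (1 - t) * ρ x = ∑ k ∈ Finset.range (M+1), (2:ℝ)⁻¹ ^ (k+1) * ν k x := by
        rw [hρdef, ← mul_assoc, mul_inv_cancel₀ (by linarith), one_mul]
      have h3 : t * σ x = ∑' j : ℕ, (2:ℝ)⁻¹ ^ (j+(M+1)+1) * ν (j+(M+1)) x := by
        rw [hσdef, ← mul_assoc, mul_inv_cancel₀ (ne_of_gt ht0), one_mul]
      rw [h2, h3]
      exact (h1.symm.trans rfl).symm ▸ h1.symm
    have hρsupp : ∀ x, x ∉ A M → ρ x = 0 := by
      intro x hx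
      show (1 - t)⁻¹ * ∑ k ∈ Finset.range (M+1), (2:ℝ)⁻¹ ^ (k+1) * ν k x = 0
      have : ∑ k ∈ Finset.range (M+1), (2:ℝ)⁻¹ ^ (k+1) * ν k x = 0 := by
        refine Finset.sum_eq_zero fun k hk => ?_
        have hkM : k ≤ M := by
          have := Finset.mem_range.1 hk; omega
        have : ν k x = 0 := by
          refine hsupp k x fun hmem => hx (hAmono hkM hmem)
        rw [this, mul_zero]
      rw [this, mul_zero]
    have hσinv : ∀ x ∈ A M, ei (fun h => σ (x⁻¹ * h) - σ h) ≤ ENNReal.ofReal eb := by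
      intro x hx
      have hptσ : ∀ h : G, σ (x⁻¹ * h) - σ h
          = t⁻¹ * ((∑' j : ℕ, (2:ℝ)⁻¹ ^ (j+(M+1)+1) * ν (j+(M+1)) (x⁻¹ * h))
            - ∑' j : ℕ, (2:ℝ)⁻¹ ^ (j+(M+1)+1) * ν (j+(M+1)) h) := by
        intro h; rw [hσdef]; ring
      have hmixbound := ei_mix_tr (c := fun j => (2:ℝ)⁻¹ ^ (j+(M+1)+1))
        (w := fun j => ν (j+(M+1))) (fun j => by positivity) (fun j => hprob _)
        (tail_summable (M+1)) x (eps := fun j => (8:ℝ)⁻¹ ^ (j+(M+1)))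
        (fun j => by positivity)
        (fun j => hinv (j+M) x (hAmono (by omega) hx))
      calc ei (fun h => σ (x⁻¹ * h) - σ h)
          = ENNReal.ofReal t⁻¹
            * ei (fun h => (∑' j : ℕ, (2:ℝ)⁻¹ ^ (j+(M+1)+1) * ν (j+(M+1)) (x⁻¹ * h))
              - ∑' j : ℕ, (2:ℝ)⁻¹ ^ (j+(M+1)+1) * ν (j+(M+1)) h) := by
            rw [ei_congr hptσ, ei_smul _ (by positivity)]
        _ ≤ ENNReal.ofReal t⁻¹
            * ∑' j : ℕ, ENNReal.ofReal ((2:ℝ)⁻¹ ^ (j+(M+1)+1))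
              * ENNReal.ofReal ((8:ℝ)⁻¹ ^ (j+(M+1))) := mul_le_mul' le_rfl hmixbound
        _ ≤ ENNReal.ofReal t⁻¹
            * ∑' j : ℕ, ENNReal.ofReal ((2:ℝ)⁻¹ ^ (j+(M+1)+1)) * ENNReal.ofReal eb := by
            refine mul_le_mul' le_rfl (ENNReal.tsum_le_tsum fun j => mul_le_mul' le_rfl ?_)
            refine ENNReal.ofReal_le_ofReal ?_
            rw [heb]
            exact pow_le_pow_of_le_one (by norm_num) (by norm_num) (by omega)
        _ = ENNReal.ofReal t⁻¹ * (ENNReal.ofReal t * ENNReal.ofReal eb) := by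
            rw [ENNReal.tsum_mul_right, geom_tail (M+1), ← ht]
        _ = ENNReal.ofReal eb := by
            rw [← mul_assoc, ← ENNReal.ofReal_mul (by positivity),
              inv_mul_cancel₀ (ne_of_gt ht0), ENNReal.ofReal_one, one_mul]
    have h5 : eb / t = (4:ℝ)⁻¹ ^ (M+1) := by
      rw [heb, ht, ← div_pow]; norm_num
    calc ei (fun h => convPow μ n (g⁻¹ * h) - convPow μ n h)
        ≤ ENNReal.ofReal (2 * (1-t)^n) + ENNReal.ofReal (3 * (eb / t)) :=
          key_est hμprob hρprob hσprob ht0 ht1 heb0 hmix hρsupp hσinv hgAM n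
      _ = ENNReal.ofReal (2 * (1-t)^n) + ENNReal.ofReal (3 * (4:ℝ)⁻¹ ^ (M+1)) := by
          rw [h5]
  -- conclusion: the limit
  have habs_n : ∀ n, Summable fun h => |convPow μ n (g⁻¹ * h) - convPow μ n h| :=
    fun n => summable_abs_sub (prob_tr (convPow_prob hμprob n) g) (convPow_prob hμprob n)
  rw [Metric.tendsto_atTop]
  intro ε hε
  obtain ⟨m0, hm0⟩ := exists_pow_lt_of_lt_one (show (0:ℝ) < ε/8 by linarith)
    (show (4:ℝ)⁻¹ < 1 by norm_num)
  set M := max m0 i with hM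
  have hiM : i ≤ M := le_max_right _ _
  have h4M : 3 * (4:ℝ)⁻¹ ^ (M+1) < ε/2 := by
    have h1 : (4:ℝ)⁻¹ ^ (M+1) ≤ 4⁻¹ ^ m0 := by
      refine pow_le_pow_of_le_one (by norm_num) (by norm_num) ?_
      have := le_max_left m0 i
      omega
    nlinarith
  set t : ℝ := (2:ℝ)⁻¹ ^ (M+1) with ht
  have ht0 : 0 < t := by positivity
  have ht1 : t < 1 := by
    have : t ≤ 2⁻¹ := by
      rw [ht]
      calc (2:ℝ)⁻¹ ^ (M+1) ≤ 2⁻¹ ^ 1 :=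
        pow_le_pow_of_le_one (by norm_num) (by norm_num) (by omega)
      _ = 2⁻¹ := pow_one _
    linarith
  have hpow := tendsto_pow_atTop_nhds_zero_of_lt_one
    (show (0:ℝ) ≤ 1 - t by linarith) (show (1:ℝ) - t < 1 by linarith)
  obtain ⟨N, hN⟩ := Filter.eventually_atTop.1
    (hpow.eventually_lt_const (show (0:ℝ) < ε/8 by linarith))
  refine ⟨N, fun n hn => ?_⟩
  have hkey := key M hiM n
  have hcomb : ei (fun h => convPow μ n (g⁻¹ * h) - convPow μ n h)
      ≤ ENNReal.ofReal (2 * (1-t)^n + 3 * (4:ℝ)⁻¹ ^ (M+1)) := by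
    refine le_trans hkey (le_of_eq ?_)
    rw [ENNReal.ofReal_add (by nlinarith [pow_nonneg (show (0:ℝ) ≤ 1 - t by linarith) n])
      (by positivity)]
  rw [ei_ofReal (habs_n n)] at hcomb
  have hfn : (∑' h, |convPow μ n (g⁻¹ * h) - convPow μ n h|)
      ≤ 2 * (1-t)^n + 3 * (4:ℝ)⁻¹ ^ (M+1) :=
    (ENNReal.ofReal_le_ofReal_iff
      (by nlinarith [pow_nonneg (show (0:ℝ) ≤ 1 - t by linarith) n,
        pow_nonneg (show (0:ℝ) ≤ (4:ℝ)⁻¹ by norm_num) (M+1)])).1 hcomb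
  have hnn : 0 ≤ ∑' h, |convPow μ n (g⁻¹ * h) - convPow μ n h| :=
    tsum_nonneg fun h => abs_nonneg _
  rw [Real.dist_eq, sub_zero, abs_of_nonneg hnn]
  have := hN n hn
  linarith

end Forward

/-- A countable discrete group satisfies Reiter's condition iff there is a probability
measure `μ` whose support generates `G` and whose convolution powers are approximatively
invariant: `‖g μ^{*n} − μ^{*n}‖ → 0` for every `g ∈ G`. -/
theorem reiter_iff_exists_approx_invariant_convolution_powers
    {G : Type*} [Group G] [Countable G] :
    ReiterCondition G ↔
    ∃ μ : G → ℝ, IsProbMeasure μ ∧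
      Subgroup.closure {g : G | 0 < μ g} = ⊤ ∧
      ∀ g : G,
        Tendsto (fun n => ∑' h, |convPow μ n (g⁻¹ * h) - convPow μ n h|) atTop (𝓝 0) := by
  constructor
  · exact reiter_forward
  · rintro ⟨μ, hμ, -, htend⟩
    exact ⟨fun n => convPow μ n, fun n => convPow_prob hμ n, htend⟩
end

section
/- Let μ be a probability measure with finite entropy H(μ) < ∞ on a countable discrete group G, and let 0 < α ≤ 1. Then the asymptotic entropy of the lazy measure ν = (1−α)δ_e + αμ satisfies h(G,ν) = α · h(G,μ). -/
open Filter Topology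
open scoped Classical

/-- The entropy `H(μ) = ∑_g −μ(g) log μ(g) ∈ [0,∞]` of a probability measure on a
countable discrete group. -/
noncomputable def entropy {G : Type*} (μ : G → ℝ) : ENNReal :=
  ∑' g, ENNReal.ofReal (-(μ g * Real.log (μ g)))

namespace Munch

open Finset

set_option linter.unusedSectionVars false

section
variable {G : Type*} [Group G]

lemma prob_summable {μ : G → ℝ} (h : IsProbMeasure μ) : Summable μ := h.2.summable

lemma prob_le_one {μ : G → ℝ} (h : IsProbMeasure μ) (g : G) : μ g ≤ 1 :=
  le_hasSum h.2 g fun b _ => h.1 b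

lemma delta_prob : IsProbMeasure (fun g : G => if g = 1 then 1 else 0) := by
  refine ⟨fun g => ?_, hasSum_ite_eq 1 1⟩
  by_cases h : g = 1 <;> simp [h]

lemma conv_summand_summable {μ ν : G → ℝ} (hμ : Summable μ) (hμ0 : ∀ g, 0 ≤ μ g)
    (hν : IsProbMeasure ν) (g : G) : Summable fun h => μ h * ν (h⁻¹ * g) := by
  refine Summable.of_nonneg_of_le (fun h => mul_nonneg (hμ0 h) (hν.1 _)) (fun h => ?_) hμ
  calc μ h * ν (h⁻¹ * g) ≤ μ h * 1 :=
        mul_le_mul_of_nonneg_left (prob_le_one hν _) (hμ0 h)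
    _ = μ h := mul_one _

lemma conv_nonneg' {μ ν : G → ℝ} (hμ0 : ∀ g, 0 ≤ μ g) (hν0 : ∀ g, 0 ≤ ν g) (g : G) :
    0 ≤ conv μ ν g :=
  tsum_nonneg fun h => mul_nonneg (hμ0 h) (hν0 _)

lemma conv_prob {μ ν : G → ℝ} (hμ : IsProbMeasure μ) (hν : IsProbMeasure ν) :
    IsProbMeasure (conv μ ν) := by
  refine ⟨conv_nonneg' hμ.1 hν.1, ?_⟩
  have hsum : Summable fun p : G × G => μ p.1 * ν p.2 :=
    Summable.mul_of_nonneg (prob_summable hμ) (prob_summable hν) hμ.1 hν.1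
  have hprod : HasSum (fun p : G × G => μ p.1 * ν p.2) 1 := by
    simpa using hμ.2.mul hν.2 hsum
  let e : G × G ≃ G × G :=
    ⟨fun p => (p.1, p.1⁻¹ * p.2), fun p => (p.1, p.1 * p.2),
      fun p => by simp, fun p => by simp⟩
  have he : HasSum (fun p : G × G => μ p.1 * ν (p.1⁻¹ * p.2)) 1 :=
    (Equiv.hasSum_iff e (f := fun p : G × G => μ p.1 * ν p.2) (a := 1)).mpr hprod
  have hswap : HasSum (fun p : G × G => μ p.2 * ν (p.2⁻¹ * p.1)) 1 :=
    (Equiv.prodComm G G).hasSum_iff.mpr he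
  exact hswap.prod_fiberwise fun g =>
    (conv_summand_summable (prob_summable hμ) hμ.1 hν g).hasSum

lemma convPow_prob {μ : G → ℝ} (hμ : IsProbMeasure μ) (n : ℕ) :
    IsProbMeasure (convPow μ n) := by
  induction n with
  | zero => exact delta_prob
  | succ n ih => exact conv_prob ih hμ


/-- the lazy measure -/
noncomputable def lazy (μ : G → ℝ) (α : ℝ) : G → ℝ :=
  fun g => (1 - α) * (if g = 1 then 1 else 0) + α * μ g

lemma lazy_prob {μ : G → ℝ} {α : ℝ} (hμ : IsProbMeasure μ) (hα0 : 0 ≤ α) (hα1 : α ≤ 1) :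
    IsProbMeasure (lazy μ α) := by
  constructor
  · intro g
    have h1 : (0:ℝ) ≤ 1 - α := by linarith
    have := delta_prob (G := G)
    exact add_nonneg (mul_nonneg h1 (this.1 g)) (mul_nonneg hα0 (hμ.1 g))
  · have h := ((hasSum_ite_eq (1:G) (1:ℝ)).mul_left (1-α)).add (hμ.2.mul_left α)
    rw [show (1-α)*1 + α*1 = (1:ℝ) by ring] at h
    exact h

lemma conv_lazy {μ ρ : G → ℝ} {α : ℝ} (hμ : IsProbMeasure μ) (hρ : IsProbMeasure ρ) (g : G) :
    conv ρ (lazy μ α) g = (1 - α) * ρ g + α * conv ρ μ g := by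
  have hδ : Summable fun h => ρ h * (if h⁻¹ * g = 1 then (1:ℝ) else 0) :=
    conv_summand_summable (prob_summable hρ) hρ.1 delta_prob g
  have hm : Summable fun h => ρ h * μ (h⁻¹ * g) :=
    conv_summand_summable (prob_summable hρ) hρ.1 hμ g
  have hδval : ∑' h, ρ h * (if h⁻¹ * g = 1 then (1:ℝ) else 0) = ρ g := by
    rw [tsum_eq_single g ?_]
    · simp
    · intro h hne
      have hne' : h⁻¹ * g ≠ 1 := fun hc => hne (inv_mul_eq_one.mp hc)
      simp [hne']
  calc conv ρ (lazy μ α) g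
      = ∑' h, ((1-α) * (ρ h * (if h⁻¹ * g = 1 then (1:ℝ) else 0)) + α * (ρ h * μ (h⁻¹ * g))) := by
        unfold conv lazy; congr 1; funext h; ring
    _ = (1-α) * (∑' h, ρ h * (if h⁻¹ * g = 1 then (1:ℝ) else 0)) + α * ∑' h, ρ h * μ (h⁻¹ * g) := by
        rw [Summable.tsum_add (hδ.mul_left _) (hm.mul_left _), tsum_mul_left, tsum_mul_left]
    _ = (1 - α) * ρ g + α * conv ρ μ g := by rw [hδval]; rfl

lemma conv_sum_left {μ : G → ℝ} (hμ : IsProbMeasure μ) (s : Finset ℕ) (c : ℕ → ℝ)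
    (ρ : ℕ → G → ℝ) (hρ : ∀ k ∈ s, IsProbMeasure (ρ k)) (g : G) :
    conv (fun g => ∑ k ∈ s, c k * ρ k g) μ g = ∑ k ∈ s, c k * conv (ρ k) μ g := by
  have h1 : ∀ h : G, (∑ k ∈ s, c k * ρ k h) * μ (h⁻¹ * g)
      = ∑ k ∈ s, c k * (ρ k h * μ (h⁻¹ * g)) := by
    intro h; rw [Finset.sum_mul]; exact Finset.sum_congr rfl fun k _ => by ring
  unfold conv
  simp_rw [h1]
  rw [Summable.tsum_finsetSum (fun k hk => ((conv_summand_summable (prob_summable (hρ k hk))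
    (hρ k hk).1 hμ g).mul_left (c k)))]
  exact Finset.sum_congr rfl fun k _ => tsum_mul_left

/-- Bernstein/binomial coefficients. -/
noncomputable def bcoef (α : ℝ) (n k : ℕ) : ℝ := (n.choose k : ℝ) * α^k * (1-α)^(n-k)

lemma bcoef_nonneg {α : ℝ} (hα0 : 0 ≤ α) (hα1 : α ≤ 1) (n k : ℕ) : 0 ≤ bcoef α n k := by
  have h1 : (0:ℝ) ≤ 1 - α := by linarith
  exact mul_nonneg (mul_nonneg (by positivity) (pow_nonneg hα0 _)) (pow_nonneg h1 _)

lemma bcoef_succ_succ (α : ℝ) (n k : ℕ) (hk : k ≤ n) :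
    bcoef α (n+1) (k+1) = α * bcoef α n k + (1-α) * bcoef α n (k+1) := by
  rcases eq_or_lt_of_le hk with rfl | hlt
  · simp [bcoef, Nat.choose_succ_self, Nat.succ_sub_succ, pow_succ]
    ring
  · have h1 : n - k = (n - (k+1)) + 1 := by omega
    simp only [bcoef, Nat.succ_sub_succ, Nat.choose_succ_succ, Nat.cast_add]
    rw [h1]
    ring

lemma bcoef_step (α : ℝ) (n : ℕ) (f : ℕ → ℝ) :
    ∑ k ∈ range (n+2), bcoef α (n+1) k * f k
      = ∑ k ∈ range (n+1), bcoef α n k * ((1-α) * f k + α * f (k+1)) := by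
  have hchoose : bcoef α n (n+1) = 0 := by simp [bcoef, Nat.choose_succ_self]
  have hT : ∀ k, bcoef α n k * ((1-α) * f k + α * f (k+1))
      = (1-α) * bcoef α n k * f k + α * bcoef α n k * f (k+1) := fun k => by ring
  simp_rw [hT]
  rw [Finset.sum_add_distrib]
  have h1 : ∑ k ∈ range (n+1), (1-α) * bcoef α n k * f k
      = ∑ k ∈ range (n+2), (1-α) * bcoef α n k * f k := by
    rw [Finset.sum_range_succ _ (n+1), hchoose]; ring
  have h2 : ∑ k ∈ range (n+1), α * bcoef α n k * f (k+1)
      = ∑ k ∈ range (n+2), (if k = 0 then 0 else α * bcoef α n (k-1) * f k) := by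
    rw [Finset.sum_range_succ' (fun k => if k = 0 then (0:ℝ) else α * bcoef α n (k-1) * f k) (n+1)]
    simp
  rw [h1, h2, ← Finset.sum_add_distrib]
  refine Finset.sum_congr rfl fun k hk => ?_
  rcases k with _ | j
  · have h0 : bcoef α (n+1) 0 = (1-α) * bcoef α n 0 := by
      simp only [bcoef, Nat.choose_zero_right, pow_zero, Nat.cast_one, one_mul, mul_one,
        Nat.sub_zero]
      rw [pow_succ]; ring
    rw [if_pos rfl, add_zero, h0]
  · have hj : j ≤ n := by have := mem_range.mp hk; omega
    simp only [Nat.succ_ne_zero, if_false, Nat.add_sub_cancel]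
    rw [bcoef_succ_succ α n j hj]
    ring

lemma lazy_decomp {μ : G → ℝ} {α : ℝ} (hμ : IsProbMeasure μ) (hα0 : 0 ≤ α) (hα1 : α ≤ 1)
    (n : ℕ) :
    convPow (lazy μ α) n = fun g => ∑ k ∈ range (n+1), bcoef α n k * convPow μ k g := by
  induction n with
  | zero =>
    funext g
    simp [convPow, bcoef]
  | succ n ih =>
    funext g
    have hν := lazy_prob hμ hα0 hα1
    have hρ : IsProbMeasure (convPow (lazy μ α) n) := convPow_prob hν n
    show conv (convPow (lazy μ α) n) (lazy μ α) g = _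
    rw [conv_lazy hμ hρ g, ih]
    rw [conv_sum_left hμ (range (n+1)) _ _ (fun k _ => convPow_prob hμ k) g]
    have : ∀ k, conv (convPow μ k) μ = convPow μ (k+1) := fun k => rfl
    simp_rw [this]
    rw [bcoef_step α n (fun k => convPow μ k g)]
    rw [Finset.mul_sum, Finset.mul_sum, ← Finset.sum_add_distrib]
    exact Finset.sum_congr rfl fun k _ => by ring


lemma entropy_eq (μ : G → ℝ) :
    entropy μ = ∑' g, ENNReal.ofReal (Real.negMulLog (μ g)) := by
  unfold entropy
  simp only [Real.negMulLog_eq_neg]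

lemma negMulLog_prob_nonneg {μ : G → ℝ} (hμ : IsProbMeasure μ) (g : G) :
    0 ≤ Real.negMulLog (μ g) :=
  Real.negMulLog_nonneg (hμ.1 g) (prob_le_one hμ g)

/-- subadditivity of `negMulLog` on nonnegative reals -/
lemma negMulLog_add_le {x y : ℝ} (hx : 0 ≤ x) (hy : 0 ≤ y) :
    Real.negMulLog (x + y) ≤ Real.negMulLog x + Real.negMulLog y := by
  have h1 : -(x * Real.log (x+y)) ≤ -(x * Real.log x) := by
    rcases eq_or_lt_of_le hx with rfl | hx'
    · simp
    · have := Real.log_le_log hx' (by linarith : x ≤ x + y)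
      nlinarith
  have h2 : -(y * Real.log (x+y)) ≤ -(y * Real.log y) := by
    rcases eq_or_lt_of_le hy with rfl | hy'
    · simp
    · have := Real.log_le_log hy' (by linarith : y ≤ x + y)
      nlinarith
  have h3 : Real.negMulLog (x+y) = -(x * Real.log (x+y)) + -(y * Real.log (x+y)) := by
    simp only [Real.negMulLog_eq_neg]; ring
  simp only [Real.negMulLog_eq_neg] at *
  linarith

lemma negMulLog_sum_le {ι : Type*} (s : Finset ι) (x : ι → ℝ) (h0 : ∀ i ∈ s, 0 ≤ x i) :
    Real.negMulLog (∑ i ∈ s, x i) ≤ ∑ i ∈ s, Real.negMulLog (x i) := by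
  induction s using Finset.cons_induction with
  | empty => simp
  | cons a s ha ih =>
    rw [Finset.sum_cons, Finset.sum_cons]
    have hxa := h0 a (Finset.mem_cons_self a s)
    have hs : 0 ≤ ∑ i ∈ s, x i :=
      Finset.sum_nonneg fun i hi => h0 i (Finset.mem_cons_of_mem hi)
    calc Real.negMulLog (x a + ∑ i ∈ s, x i)
        ≤ Real.negMulLog (x a) + Real.negMulLog (∑ i ∈ s, x i) := negMulLog_add_le hxa hs
      _ ≤ _ := add_le_add_right (ih fun i hi => h0 i (Finset.mem_cons_of_mem hi)) _

lemma ofReal_sum_le {ι : Type*} (s : Finset ι) (x : ι → ℝ) :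
    ENNReal.ofReal (∑ i ∈ s, x i) ≤ ∑ i ∈ s, ENNReal.ofReal (x i) := by
  induction s using Finset.cons_induction with
  | empty => simp
  | cons a s ha ih =>
    rw [Finset.sum_cons, Finset.sum_cons]
    exact (ENNReal.ofReal_add_le).trans (add_le_add_right ih _)

/-- countable subadditivity of `negMulLog` after `ofReal` -/
lemma ofReal_negMulLog_tsum_le {ι : Type*} {f : ι → ℝ} (h0 : ∀ i, 0 ≤ f i) (hs : Summable f) :
    ENNReal.ofReal (Real.negMulLog (∑' i, f i))
      ≤ ∑' i, ENNReal.ofReal (Real.negMulLog (f i)) := by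
  have hten : Filter.Tendsto
      (fun s : Finset ι => ENNReal.ofReal (Real.negMulLog (∑ i ∈ s, f i)))
      atTop (𝓝 (ENNReal.ofReal (Real.negMulLog (∑' i, f i)))) :=
    ((ENNReal.continuous_ofReal.comp Real.continuous_negMulLog).tendsto _).comp hs.hasSum
  refine le_of_tendsto hten (Filter.Eventually.of_forall fun s => ?_)
  calc ENNReal.ofReal (Real.negMulLog (∑ i ∈ s, f i))
      ≤ ENNReal.ofReal (∑ i ∈ s, Real.negMulLog (f i)) :=
        ENNReal.ofReal_le_ofReal (negMulLog_sum_le s f fun i _ => h0 i)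
    _ ≤ ∑ i ∈ s, ENNReal.ofReal (Real.negMulLog (f i)) := ofReal_sum_le s _
    _ ≤ ∑' i, ENNReal.ofReal (Real.negMulLog (f i)) := ENNReal.sum_le_tsum s

lemma tsum_ofReal_prob {μ : G → ℝ} (hμ : IsProbMeasure μ) :
    ∑' g, ENNReal.ofReal (μ g) = 1 := by
  rw [← ENNReal.ofReal_tsum_of_nonneg hμ.1 (prob_summable hμ), hμ.2.tsum_eq, ENNReal.ofReal_one]

lemma entropy_smul {μ : G → ℝ} (hμ : IsProbMeasure μ) {c : ℝ} (hc0 : 0 ≤ c) (hc1 : c ≤ 1) :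
    ∑' g, ENNReal.ofReal (Real.negMulLog (c * μ g))
      = ENNReal.ofReal c * entropy μ + ENNReal.ofReal (Real.negMulLog c) := by
  have hc' : 0 ≤ Real.negMulLog c := Real.negMulLog_nonneg hc0 hc1
  have hpt : ∀ g : G, ENNReal.ofReal (Real.negMulLog (c * μ g))
      = ENNReal.ofReal c * ENNReal.ofReal (Real.negMulLog (μ g))
        + ENNReal.ofReal (Real.negMulLog c) * ENNReal.ofReal (μ g) := by
    intro g
    rw [Real.negMulLog_mul]
    rw [ENNReal.ofReal_add (mul_nonneg (hμ.1 g) hc') (mul_nonneg hc0 (negMulLog_prob_nonneg hμ g)),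
      ENNReal.ofReal_mul (hμ.1 g), ENNReal.ofReal_mul hc0]
    ring
  calc ∑' g, ENNReal.ofReal (Real.negMulLog (c * μ g))
      = ∑' g, (ENNReal.ofReal c * ENNReal.ofReal (Real.negMulLog (μ g))
          + ENNReal.ofReal (Real.negMulLog c) * ENNReal.ofReal (μ g)) := by
        exact tsum_congr hpt
    _ = ENNReal.ofReal c * ∑' g, ENNReal.ofReal (Real.negMulLog (μ g))
          + ENNReal.ofReal (Real.negMulLog c) * ∑' g, ENNReal.ofReal (μ g) := by
        rw [ENNReal.tsum_add, ENNReal.tsum_mul_left, ENNReal.tsum_mul_left]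
    _ = ENNReal.ofReal c * entropy μ + ENNReal.ofReal (Real.negMulLog c) := by
        rw [tsum_ofReal_prob hμ, entropy_eq, mul_one]

/-- upper bound for entropy of a finite mixture -/
lemma entropy_mix_le {s : Finset ℕ} {p : ℕ → ℝ} {ρ : ℕ → G → ℝ}
    (hp0 : ∀ k ∈ s, 0 ≤ p k) (hp1 : ∀ k ∈ s, p k ≤ 1)
    (hρ : ∀ k ∈ s, IsProbMeasure (ρ k)) :
    entropy (fun g => ∑ k ∈ s, p k * ρ k g)
      ≤ ∑ k ∈ s, (ENNReal.ofReal (p k) * entropy (ρ k)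
          + ENNReal.ofReal (Real.negMulLog (p k))) := by
  rw [entropy_eq]
  calc ∑' g, ENNReal.ofReal (Real.negMulLog (∑ k ∈ s, p k * ρ k g))
      ≤ ∑' g, ∑ k ∈ s, ENNReal.ofReal (Real.negMulLog (p k * ρ k g)) := by
        refine ENNReal.tsum_le_tsum fun g => ?_
        calc ENNReal.ofReal (Real.negMulLog (∑ k ∈ s, p k * ρ k g))
            ≤ ENNReal.ofReal (∑ k ∈ s, Real.negMulLog (p k * ρ k g)) :=
              ENNReal.ofReal_le_ofReal (negMulLog_sum_le s _
                fun k hk => mul_nonneg (hp0 k hk) ((hρ k hk).1 g))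
          _ ≤ _ := ofReal_sum_le s _
    _ = ∑ k ∈ s, ∑' g, ENNReal.ofReal (Real.negMulLog (p k * ρ k g)) := by
        rw [Summable.tsum_finsetSum fun k _ => ENNReal.summable]
    _ ≤ _ := by
        refine Finset.sum_le_sum fun k hk => ?_
        rw [entropy_smul (hρ k hk) (hp0 k hk) (hp1 k hk)]

/-- lower bound for entropy of a finite mixture -/
lemma le_entropy_mix {s : Finset ℕ} {p : ℕ → ℝ} {ρ : ℕ → G → ℝ}
    (hp0 : ∀ k ∈ s, 0 ≤ p k) (hpsum : ∑ k ∈ s, p k = 1)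
    (hρ : ∀ k ∈ s, IsProbMeasure (ρ k)) :
    ∑ k ∈ s, ENNReal.ofReal (p k) * entropy (ρ k)
      ≤ entropy (fun g => ∑ k ∈ s, p k * ρ k g) := by
  simp_rw [entropy_eq]
  have hpt : ∀ g : G, ∑ k ∈ s, ENNReal.ofReal (p k) * ENNReal.ofReal (Real.negMulLog (ρ k g))
      ≤ ENNReal.ofReal (Real.negMulLog (∑ k ∈ s, p k * ρ k g)) := by
    intro g
    have hj : ∑ k ∈ s, p k * Real.negMulLog (ρ k g)
        ≤ Real.negMulLog (∑ k ∈ s, p k * ρ k g) := by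
      have := Real.concaveOn_negMulLog.le_map_sum hp0 hpsum
        (fun k hk => Set.mem_Ici.mpr ((hρ k hk).1 g))
      simpa [smul_eq_mul] using this
    calc ∑ k ∈ s, ENNReal.ofReal (p k) * ENNReal.ofReal (Real.negMulLog (ρ k g))
        = ENNReal.ofReal (∑ k ∈ s, p k * Real.negMulLog (ρ k g)) := by
          rw [ENNReal.ofReal_sum_of_nonneg
            fun k hk => mul_nonneg (hp0 k hk) (negMulLog_prob_nonneg (hρ k hk) g)]
          exact Finset.sum_congr rfl fun k hk => (ENNReal.ofReal_mul (hp0 k hk)).symm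
      _ ≤ _ := ENNReal.ofReal_le_ofReal hj
  calc ∑ k ∈ s, ENNReal.ofReal (p k) * ∑' g, ENNReal.ofReal (Real.negMulLog (ρ k g))
      = ∑' g, ∑ k ∈ s, ENNReal.ofReal (p k) * ENNReal.ofReal (Real.negMulLog (ρ k g)) := by
        rw [Summable.tsum_finsetSum fun k _ => ENNReal.summable]
        exact Finset.sum_congr rfl fun k _ => (ENNReal.tsum_mul_left).symm
    _ ≤ _ := ENNReal.tsum_le_tsum hpt

/-- entropy is subadditive under convolution -/
lemma entropy_conv_le {ρ μ : G → ℝ} (hρ : IsProbMeasure ρ) (hμ : IsProbMeasure μ) :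
    entropy (conv ρ μ) ≤ entropy ρ + entropy μ := by
  have step1 : entropy (conv ρ μ)
      ≤ ∑' g, ∑' h, ENNReal.ofReal (Real.negMulLog (ρ h * μ (h⁻¹ * g))) := by
    rw [entropy_eq]
    refine ENNReal.tsum_le_tsum fun g => ?_
    exact ofReal_negMulLog_tsum_le (fun h => mul_nonneg (hρ.1 h) (hμ.1 _))
      (conv_summand_summable (prob_summable hρ) hρ.1 hμ g)
  rw [ENNReal.tsum_comm] at step1
  have hfiber : ∀ h : G, ∑' g, ENNReal.ofReal (Real.negMulLog (ρ h * μ (h⁻¹ * g)))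
      = ENNReal.ofReal (ρ h) * entropy μ + ENNReal.ofReal (Real.negMulLog (ρ h)) := by
    intro h
    have htr : IsProbMeasure (fun g => μ (h⁻¹ * g)) :=
      ⟨fun g => hμ.1 _, (Equiv.mulLeft h⁻¹).hasSum_iff.mpr hμ.2⟩
    rw [entropy_smul htr (hρ.1 h) (prob_le_one hρ h)]
    congr 2
    rw [entropy_eq, entropy_eq]
    exact (Equiv.mulLeft h⁻¹).tsum_eq fun g => ENNReal.ofReal (Real.negMulLog (μ g))
  calc entropy (conv ρ μ)
      ≤ ∑' h, (ENNReal.ofReal (ρ h) * entropy μ + ENNReal.ofReal (Real.negMulLog (ρ h))) := by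
        rw [← tsum_congr hfiber]; exact step1
    _ = (∑' h, ENNReal.ofReal (ρ h)) * entropy μ
          + ∑' h, ENNReal.ofReal (Real.negMulLog (ρ h)) := by
        rw [ENNReal.tsum_add, ENNReal.tsum_mul_right]
    _ = entropy ρ + entropy μ := by
        rw [tsum_ofReal_prob hρ, one_mul, add_comm, entropy_eq ρ]

lemma entropy_delta : entropy (fun g : G => if g = 1 then 1 else 0) = 0 := by
  rw [entropy_eq]
  refine ENNReal.tsum_eq_zero.mpr fun g => ?_
  by_cases h : g = 1 <;> simp [h]

lemma entropy_convPow_le {μ : G → ℝ} (hμ : IsProbMeasure μ) (n : ℕ) :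
    entropy (convPow μ n) ≤ n * entropy μ := by
  induction n with
  | zero => simp [convPow, entropy_delta]
  | succ n ih =>
    calc entropy (convPow μ (n+1)) ≤ entropy (convPow μ n) + entropy μ :=
          entropy_conv_le (convPow_prob hμ n) hμ
      _ ≤ n * entropy μ + entropy μ := add_le_add_left ih _
      _ = (↑(n+1)) * entropy μ := by push_cast; ring

/-- max-entropy bound on a finite set -/
lemma sum_negMulLog_le_log {s : Finset ℕ} {p : ℕ → ℝ} (hp0 : ∀ k ∈ s, 0 ≤ p k)
    (hpsum : ∑ k ∈ s, p k = 1) :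
    ∑ k ∈ s, Real.negMulLog (p k) ≤ Real.log s.card := by
  classical
  set t := s.filter (fun k => p k ≠ 0) with ht
  have hsub : t ⊆ s := Finset.filter_subset _ _
  have hsum_t : ∑ k ∈ t, p k = 1 := by
    rw [ht, Finset.sum_filter_ne_zero, hpsum]
  have heq : ∑ k ∈ s, Real.negMulLog (p k) = ∑ k ∈ t, Real.negMulLog (p k) := by
    refine (Finset.sum_subset hsub fun k hk hkt => ?_).symm
    have : p k = 0 := by
      by_contra hne
      exact hkt (Finset.mem_filter.mpr ⟨hk, hne⟩)
    simp [this]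
  have hpos : ∀ k ∈ t, 0 < p k := fun k hk =>
    lt_of_le_of_ne (hp0 k (hsub hk)) (Ne.symm (Finset.mem_filter.mp hk).2)
  have hjen : ∑ k ∈ t, p k * Real.log (p k)⁻¹ ≤ Real.log (∑ k ∈ t, p k * (p k)⁻¹) := by
    have := (strictConcaveOn_log_Ioi.concaveOn).le_map_sum
      (fun k hk => (hpos k hk).le) hsum_t
      (fun k hk => Set.mem_Ioi.mpr (inv_pos.mpr (hpos k hk)))
    simpa [smul_eq_mul] using this
  have hcard : ∑ k ∈ t, p k * (p k)⁻¹ = (t.card : ℝ) := by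
    rw [Finset.sum_congr rfl fun k hk => mul_inv_cancel₀ (hpos k hk).ne']
    simp
  have hcard_pos : 0 < t.card := by
    by_contra hc
    have : t = ∅ := Finset.card_eq_zero.mp (by omega)
    rw [this] at hsum_t; simp at hsum_t
  have hnm : ∀ k ∈ t, Real.negMulLog (p k) = p k * Real.log (p k)⁻¹ := by
    intro k hk
    rw [Real.log_inv, Real.negMulLog]
    ring
  calc ∑ k ∈ s, Real.negMulLog (p k) = ∑ k ∈ t, p k * Real.log (p k)⁻¹ := by
        rw [heq]; exact Finset.sum_congr rfl hnm
    _ ≤ Real.log (t.card : ℝ) := by rw [← hcard]; exact hjen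
    _ ≤ Real.log (s.card : ℝ) := by
        refine Real.log_le_log (by exact_mod_cast hcard_pos) ?_
        exact_mod_cast Finset.card_le_card hsub


lemma bcoef_sum (α : ℝ) (n : ℕ) : ∑ k ∈ range (n+1), bcoef α n k = 1 := by
  have h := add_pow α (1-α) n
  rw [show α + (1-α) = 1 by ring, one_pow] at h
  calc ∑ k ∈ range (n+1), bcoef α n k
      = ∑ k ∈ range (n+1), α^k * (1-α)^(n-k) * (n.choose k : ℝ) :=
        Finset.sum_congr rfl fun k _ => by unfold bcoef; ring
    _ = 1 := h.symm

lemma bcoef_le_one {α : ℝ} (hα0 : 0 ≤ α) (hα1 : α ≤ 1) {n k : ℕ} (hk : k ∈ range (n+1)) :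
    bcoef α n k ≤ 1 := by
  rw [← bcoef_sum α n]
  exact Finset.single_le_sum (fun j _ => bcoef_nonneg hα0 hα1 n j) hk

lemma bcoef_mean (α : ℝ) (n : ℕ) :
    ∑ k ∈ range (n+1), bcoef α n k * (k:ℝ) = α * n := by
  cases n with
  | zero => simp
  | succ m =>
    rw [Finset.sum_range_succ' (fun k => bcoef α (m+1) k * (k:ℝ)) (m+1)]
    have hterm : ∀ j, bcoef α (m+1) (j+1) * ((j:ℝ)+1) = ((m:ℝ)+1) * α * bcoef α m j := by
      intro j
      have hc : ((j:ℝ)+1) * ((m+1).choose (j+1) : ℝ) = ((m:ℝ)+1) * (m.choose j : ℝ) := by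
        have h := Nat.add_one_mul_choose_eq m j
        have h2 : ((m+1) * m.choose j : ℕ) = ((m+1).choose (j+1) * (j+1) : ℕ) := by
          simpa [Nat.succ_eq_add_one] using h
        have := congrArg (fun x : ℕ => (x : ℝ)) h2
        push_cast at this
        linarith
      simp only [bcoef, Nat.succ_sub_succ]
      calc (((m+1).choose (j+1) : ℝ) * α^(j+1) * (1-α)^(m-j)) * ((j:ℝ)+1)
          = (((j:ℝ)+1) * ((m+1).choose (j+1) : ℝ)) * α^(j+1) * (1-α)^(m-j) := by ring
        _ = (((m:ℝ)+1) * (m.choose j : ℝ)) * α^(j+1) * (1-α)^(m-j) := by rw [hc]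
        _ = ((m:ℝ)+1) * α * ((m.choose j : ℝ) * α^j * (1-α)^(m-j)) := by
            rw [pow_succ]; ring
    push_cast
    rw [Finset.sum_congr rfl fun j _ => hterm j]
    rw [← Finset.mul_sum, bcoef_sum α m]
    simp
    ring

theorem main
    {G : Type*} [Group G] [Countable G] (μ : G → ℝ)
    (hμ : IsProbMeasure μ) (hH : entropy μ < ⊤)
    (α : ℝ) (hα0 : 0 < α) (hα1 : α ≤ 1) (L : ℝ)
    (hL : Tendsto (fun n : ℕ => (entropy (convPow μ n)).toReal / n) atTop (𝓝 L)) :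
    Tendsto
      (fun n : ℕ =>
        (entropy (convPow (fun g : G => (1 - α) * (if g = 1 then 1 else 0) + α * μ g) n)).toReal
          / n)
      atTop (𝓝 (α * L)) := by
  have hα0' : 0 ≤ α := hα0.le
  set ν : G → ℝ := lazy μ α with hν
  have hμk_fin : ∀ k, entropy (convPow μ k) ≠ ⊤ := by
    intro k
    exact ((entropy_convPow_le hμ k).trans_lt
      (ENNReal.mul_lt_top (ENNReal.natCast_lt_top k) hH)).ne
  set Hk : ℕ → ℝ := fun k => (entropy (convPow μ k)).toReal with hHk
  set S : ℕ → ℝ := fun n => ∑ k ∈ range (n+1), bcoef α n k * Hk k with hS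
  set a : ℕ → ℝ := fun n => (entropy (convPow ν n)).toReal with ha
  -- ENNReal-level bounds
  have hupperE : ∀ n, entropy (convPow ν n)
      ≤ ∑ k ∈ range (n+1), (ENNReal.ofReal (bcoef α n k) * entropy (convPow μ k)
          + ENNReal.ofReal (Real.negMulLog (bcoef α n k))) := by
    intro n
    rw [hν, lazy_decomp hμ hα0' hα1 n]
    exact entropy_mix_le (fun k _ => bcoef_nonneg hα0' hα1 n k)
      (fun k hk => bcoef_le_one hα0' hα1 hk) (fun k _ => convPow_prob hμ k)
  have hlowerE : ∀ n, ∑ k ∈ range (n+1), ENNReal.ofReal (bcoef α n k) * entropy (convPow μ k)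
      ≤ entropy (convPow ν n) := by
    intro n
    rw [hν, lazy_decomp hμ hα0' hα1 n]
    exact le_entropy_mix (fun k _ => bcoef_nonneg hα0' hα1 n k)
      (bcoef_sum α n) (fun k _ => convPow_prob hμ k)
  have hRHS_fin : ∀ n, (∑ k ∈ range (n+1), (ENNReal.ofReal (bcoef α n k) * entropy (convPow μ k)
      + ENNReal.ofReal (Real.negMulLog (bcoef α n k)))) ≠ ⊤ := by
    intro n
    refine (ENNReal.sum_lt_top.mpr fun k _ => ?_).ne
    exact ENNReal.add_lt_top.mpr ⟨ENNReal.mul_lt_top ENNReal.ofReal_lt_top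
      (lt_top_iff_ne_top.mpr (hμk_fin k)), ENNReal.ofReal_lt_top⟩
  have ha_fin : ∀ n, entropy (convPow ν n) ≠ ⊤ :=
    fun n => ((hupperE n).trans_lt (lt_top_iff_ne_top.mpr (hRHS_fin n))).ne
  -- real versions
  have hSle : ∀ n, S n ≤ a n := by
    intro n
    have h1 := hlowerE n
    have h2 : (∑ k ∈ range (n+1), ENNReal.ofReal (bcoef α n k) * entropy (convPow μ k)).toReal
        = S n := by
      rw [ENNReal.toReal_sum (fun k _ => (ENNReal.mul_lt_top ENNReal.ofReal_lt_top
        (lt_top_iff_ne_top.mpr (hμk_fin k))).ne)]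
      exact Finset.sum_congr rfl fun k _ => by
        rw [ENNReal.toReal_mul, ENNReal.toReal_ofReal (bcoef_nonneg hα0' hα1 n k)]
    rw [← h2]
    exact ENNReal.toReal_mono (ha_fin n) h1
  have haleS : ∀ n, a n ≤ S n + Real.log (n+1) := by
    intro n
    have h1 := hupperE n
    have h2 : (∑ k ∈ range (n+1), (ENNReal.ofReal (bcoef α n k) * entropy (convPow μ k)
        + ENNReal.ofReal (Real.negMulLog (bcoef α n k)))).toReal
        = S n + ∑ k ∈ range (n+1), Real.negMulLog (bcoef α n k) := by
      rw [ENNReal.toReal_sum (fun k hk => (ENNReal.add_lt_top.mpr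
        ⟨ENNReal.mul_lt_top ENNReal.ofReal_lt_top (lt_top_iff_ne_top.mpr (hμk_fin k)),
          ENNReal.ofReal_lt_top⟩).ne)]
      rw [← Finset.sum_add_distrib]
      refine Finset.sum_congr rfl fun k hk => ?_
      rw [ENNReal.toReal_add (ENNReal.mul_lt_top ENNReal.ofReal_lt_top
        (lt_top_iff_ne_top.mpr (hμk_fin k))).ne ENNReal.ofReal_ne_top,
        ENNReal.toReal_mul, ENNReal.toReal_ofReal (bcoef_nonneg hα0' hα1 n k),
        ENNReal.toReal_ofReal (Real.negMulLog_nonneg (bcoef_nonneg hα0' hα1 n k)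
          (bcoef_le_one hα0' hα1 hk))]
    have h3 : ∑ k ∈ range (n+1), Real.negMulLog (bcoef α n k) ≤ Real.log (n+1) := by
      have := sum_negMulLog_le_log (s := range (n+1)) (p := bcoef α n)
        (fun k _ => bcoef_nonneg hα0' hα1 n k) (bcoef_sum α n)
      simpa using this
    calc a n ≤ (∑ k ∈ range (n+1), (ENNReal.ofReal (bcoef α n k) * entropy (convPow μ k)
        + ENNReal.ofReal (Real.negMulLog (bcoef α n k)))).toReal :=
          ENNReal.toReal_mono (hRHS_fin n) h1
      _ = S n + ∑ k ∈ range (n+1), Real.negMulLog (bcoef α n k) := h2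
      _ ≤ S n + Real.log (n+1) := by linarith
  -- Tendsto S n / n → α * L
  have hStend : Tendsto (fun n : ℕ => S n / n) atTop (𝓝 (α * L)) := by
    rw [Metric.tendsto_atTop]
    intro ε hε
    have hεα : 0 < ε / (2 * (α + 1)) := by positivity
    obtain ⟨K, hK⟩ := Metric.tendsto_atTop.mp hL (ε / (2 * (α + 1))) hεα
    set ε' := ε / (2 * (α + 1)) with hε'
    set K' := max K 1 with hK'
    set C := ∑ k ∈ range K', |Hk k - k * L| with hC
    have hC0 : 0 ≤ C := Finset.sum_nonneg fun k _ => abs_nonneg _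
    obtain ⟨N0, hN0⟩ := exists_nat_gt (2 * C / ε)
    refine ⟨max (max N0 K') 1, fun n hn => ?_⟩
    have hn1 : 1 ≤ n := le_trans (le_max_right _ 1) hn
    have hnK' : K' ≤ n := le_trans ((le_max_right N0 K').trans (le_max_left _ 1)) hn
    have hnN0 : N0 ≤ n := le_trans ((le_max_left N0 K').trans (le_max_left _ 1)) hn
    have hnpos : (0:ℝ) < n := by exact_mod_cast hn1
    -- main estimate
    have hdiff : ∑ k ∈ range (n+1), bcoef α n k * (Hk k - k * L) = S n - α * L * n := by
      have hrw : ∀ k, bcoef α n k * (Hk k - k * L)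
          = bcoef α n k * Hk k - (bcoef α n k * (k:ℝ)) * L := fun k => by ring
      rw [Finset.sum_congr rfl fun k _ => hrw k, Finset.sum_sub_distrib, ← Finset.sum_mul,
        bcoef_mean α n]
      show _ = (∑ k ∈ range (n+1), bcoef α n k * Hk k) - α * L * n
      ring
    have hest : |S n - α * L * n| ≤ C + ε' * (α * n) := by
      rw [← hdiff]
      have habs1 : |∑ k ∈ range (n+1), bcoef α n k * (Hk k - k * L)|
          ≤ ∑ k ∈ range (n+1), bcoef α n k * |Hk k - k * L| := by
        refine (Finset.abs_sum_le_sum_abs _ _).trans (le_of_eq ?_)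
        refine Finset.sum_congr rfl fun k hk => ?_
        rw [abs_mul, abs_of_nonneg (bcoef_nonneg hα0' hα1 n k)]
      refine habs1.trans ?_
      rw [Finset.range_eq_Ico,
        ← Finset.sum_Ico_consecutive _ (Nat.zero_le K') (show K' ≤ n+1 by omega)]
      have hpart1 : ∑ k ∈ Finset.Ico 0 K', bcoef α n k * |Hk k - k * L| ≤ C := by
        rw [← Finset.range_eq_Ico]
        refine Finset.sum_le_sum fun k hk => ?_
        have hkmem : k ∈ range (n+1) := by
          rw [Finset.mem_range] at hk ⊢; omega
        exact mul_le_of_le_one_left (abs_nonneg _) (bcoef_le_one hα0' hα1 hkmem)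
      have hpart2 : ∑ k ∈ Ico K' (n+1), bcoef α n k * |Hk k - k * L| ≤ ε' * (α * n) := by
        have hterm : ∀ k ∈ Ico K' (n+1), bcoef α n k * |Hk k - k * L|
            ≤ ε' * (bcoef α n k * (k:ℝ)) := by
          intro k hk
          obtain ⟨hk1, _⟩ := Finset.mem_Ico.mp hk
          have hkK : K ≤ k := le_trans (le_max_left K 1) hk1
          have hk1' : 1 ≤ k := le_trans (le_max_right K 1) hk1
          have hkpos : (0:ℝ) < k := by exact_mod_cast hk1'
          have hd : |Hk k / k - L| < ε' := by
            have := hK k hkK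
            rw [Real.dist_eq] at this
            exact this
          have heq : |Hk k - k * L| = (k:ℝ) * |Hk k / k - L| := by
            rw [← abs_of_pos hkpos, ← abs_mul]
            congr 1
            field_simp
            rw [abs_of_pos hkpos]; ring
          rw [heq]
          calc bcoef α n k * ((k:ℝ) * |Hk k / k - L|)
              ≤ bcoef α n k * ((k:ℝ) * ε') :=
                mul_le_mul_of_nonneg_left
                  (mul_le_mul_of_nonneg_left hd.le hkpos.le)
                  (bcoef_nonneg hα0' hα1 n k)
            _ = ε' * (bcoef α n k * (k:ℝ)) := by ring
        calc ∑ k ∈ Ico K' (n+1), bcoef α n k * |Hk k - k * L|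
            ≤ ∑ k ∈ Ico K' (n+1), ε' * (bcoef α n k * (k:ℝ)) := Finset.sum_le_sum hterm
          _ ≤ ∑ k ∈ range (n+1), ε' * (bcoef α n k * (k:ℝ)) := by
              refine Finset.sum_le_sum_of_subset_of_nonneg ?_ fun k _ _ => ?_
              · rw [Finset.range_eq_Ico]
                exact Finset.Ico_subset_Ico (Nat.zero_le _) le_rfl
              · exact mul_nonneg hεα.le
                  (mul_nonneg (bcoef_nonneg hα0' hα1 n k) (Nat.cast_nonneg k))
          _ = ε' * (α * n) := by rw [← Finset.mul_sum, bcoef_mean α n]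
      exact add_le_add hpart1 hpart2
    -- conclude
    rw [Real.dist_eq]
    have heq2 : S n / n - α * L = (S n - α * L * n) / n := by field_simp
    rw [heq2, abs_div, abs_of_pos hnpos]
    have hstep : |S n - α * L * n| / n ≤ (C + ε' * (α * n)) / n := by gcongr
    have hsum2 : (C + ε' * (α * n)) / n = C / n + ε' * α := by field_simp
    have hN0r : 2 * C / ε < (n:ℝ) := lt_of_lt_of_le hN0 (by exact_mod_cast hnN0)
    have h3 : C / n < ε / 2 := by
      rw [div_lt_iff₀ hnpos]
      rw [div_lt_iff₀ hε] at hN0r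
      nlinarith
    have h4 : ε' * α < ε / 2 := by
      rw [hε', div_mul_eq_mul_div, div_lt_div_iff₀ (by positivity) (by norm_num)]
      nlinarith
    linarith [hstep, hsum2 ▸ hstep]
  -- squeeze
  have hlog : Tendsto (fun n : ℕ => Real.log ((n:ℝ)+1) / n) atTop (𝓝 0) := by
    have h1 : Tendsto (fun n : ℕ => Real.log ((n:ℝ)+1) / ((n:ℝ)+1)) atTop (𝓝 0) :=
      (Real.isLittleO_log_id_atTop.tendsto_div_nhds_zero).comp
        (tendsto_atTop_add_const_right atTop 1 tendsto_natCast_atTop_atTop)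
    have h2 : Tendsto (fun n : ℕ => ((n:ℝ)+1) / n) atTop (𝓝 1) := by
      have hb : Tendsto (fun n : ℕ => 1 + 1/(n:ℝ)) atTop (𝓝 (1 + 0)) :=
        tendsto_const_nhds.add tendsto_one_div_atTop_nhds_zero_nat
      rw [add_zero] at hb
      refine hb.congr' ?_
      filter_upwards [eventually_ge_atTop 1] with n hn
      have hnpos : (0:ℝ) < n := by exact_mod_cast hn
      field_simp
    have h3 := h1.mul h2
    rw [zero_mul] at h3
    refine h3.congr' ?_
    filter_upwards [eventually_ge_atTop 1] with n hn
    have hnpos : (0:ℝ) < n := by exact_mod_cast hn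
    field_simp
  have hup : Tendsto (fun n : ℕ => S n / n + Real.log ((n:ℝ)+1) / n) atTop (𝓝 (α * L)) := by
    have := hStend.add hlog
    rwa [add_zero] at this
  refine tendsto_of_tendsto_of_tendsto_of_le_of_le' hStend hup ?_ ?_
  · filter_upwards [eventually_ge_atTop 1] with n hn
    have hnpos : (0:ℝ) < n := by exact_mod_cast hn
    show S n / n ≤ a n / n
    gcongr
    exact hSle n
  · filter_upwards [eventually_ge_atTop 1] with n hn
    have hnpos : (0:ℝ) < n := by exact_mod_cast hn
    show a n / n ≤ S n / n + Real.log ((n:ℝ)+1) / n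
    rw [← add_div]
    gcongr
    exact haleS n


end

end Munch

/-- M\"unchhausen entropy scaling: the lazy measure `ν = (1−α)δ_e + αμ` has asymptotic
entropy `h(G,ν) = α · h(G,μ)`. -/
theorem asymptotic_entropy_lazy_measure
    {G : Type*} [Group G] [Countable G] (μ : G → ℝ)
    (hμ : IsProbMeasure μ) (hH : entropy μ < ⊤)
    (α : ℝ) (hα0 : 0 < α) (hα1 : α ≤ 1) (L : ℝ)
    (hL : Tendsto (fun n : ℕ => (entropy (convPow μ n)).toReal / n) atTop (𝓝 L)) :
    Tendsto
      (fun n : ℕ =>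
        (entropy (convPow (fun g : G => (1 - α) * (if g = 1 then 1 else 0) + α * μ g) n)).toReal
          / n)
      atTop (𝓝 (α * L)) := by
  exact Munch.main μ hμ hH α hα0 hα1 L hL
end
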